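/- arXiv:1512.01229 — 4 statements merged into one kernel-verified Lean document; each statement's English description precedes it below -/
import Mathlib

section
/- Let X be an exchangeable sequence of {0,1}-valued random variables and let p ∈ [0,1]. If P(X_0 = ⋯ = X_{h−1} = 1) = p^h for every h ≥ 1, then for every n ≥ 1 and 0 ≤ h ≤ n, ω_h^(n) = C(n,h) p^h (1−p)^{n−h}; that is, the number of successes in n trials has the binomial distribution with parameters n and p. -/
open MeasureTheory ProbabilityTheory Filter

def Exchangeable {Ω : Type*} [MeasurableSpace Ω] (P : Measure Ω) (X : ℕ → Ω → ℕ) : Prop :=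
  ∀ (n : ℕ) (σ : Equiv.Perm (Fin n)),
    P.map (fun ω => fun i : Fin n => X (σ i) ω) =
      P.map (fun ω => fun i : Fin n => X i ω)

/-- `succProb P X n h = ω_h^(n)`, the probability of exactly `h` successes in the
first `n` trials. -/
noncomputable def succProb {Ω : Type*} [MeasurableSpace Ω] (P : Measure Ω)
    (X : ℕ → Ω → ℕ) (n h : ℕ) : ℝ :=
  (P {ω | ∑ i ∈ Finset.range n, X i ω = h}).toReal

section Aux

variable {Ω : Type*} [MeasurableSpace Ω] (P : Measure Ω) (X : ℕ → Ω → ℕ)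

/-- permutation moving `t` onto `s` -/
lemma exists_perm_finset {n : ℕ} (s t : Finset (Fin n)) (h : s.card = t.card) :
    ∃ σ : Equiv.Perm (Fin n), ∀ i, σ i ∈ s ↔ i ∈ t := by
  have h' : tᶜ.card = sᶜ.card := by simp [Finset.card_compl, h]
  let e1 : {x // x ∈ t} ≃ {x // x ∈ s} := (Finset.equivOfCardEq h).symm
  let e2 : {x // ¬ x ∈ t} ≃ {x // ¬ x ∈ s} :=
    ((Equiv.subtypeEquivRight (fun x => (Finset.mem_compl (s := t)).symm)).trans
      (Finset.equivOfCardEq h')).trans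
      (Equiv.subtypeEquivRight (fun x => Finset.mem_compl (s := s)))
  refine ⟨Equiv.subtypeCongr e1 e2, fun i => ?_⟩
  by_cases hi : i ∈ t
  · simp only [Equiv.subtypeCongr, Equiv.trans_apply,
      Equiv.sumCompl_symm_apply_of_pos hi, Equiv.sumCongr_apply, Sum.map_inl,
      Equiv.sumCompl_apply_inl]
    exact iff_of_true (e1 ⟨i, hi⟩).2 hi
  · simp only [Equiv.subtypeCongr, Equiv.trans_apply,
      Equiv.sumCompl_symm_apply_of_neg hi, Equiv.sumCongr_apply, Sum.map_inr,
      Equiv.sumCompl_apply_inr]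
    exact iff_of_false (e2 ⟨i, hi⟩).2 hi

lemma pat_meas (hXmeas : ∀ k, Measurable (X k)) (n : ℕ) (v : ℕ → ℕ) :
    MeasurableSet {ω | ∀ i : Fin n, X i ω = v i} := by
  have : {ω | ∀ i : Fin n, X i ω = v i} = ⋂ i : Fin n, (X i) ⁻¹' {v i} := by
    ext ω; simp [Set.mem_iInter]
  rw [this]
  exact MeasurableSet.iInter fun i => (hXmeas i) (measurableSet_singleton _)

lemma pat_perm (hXmeas : ∀ k, Measurable (X k)) (hexch : Exchangeable P X)
    (n : ℕ) (σ : Equiv.Perm (Fin n)) (v : Fin n → ℕ) :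
    P {ω | ∀ i : Fin n, X i ω = v (σ i)} = P {ω | ∀ i : Fin n, X i ω = v i} := by
  have hT : MeasurableSet {f : Fin n → ℕ | ∀ i, f i = v i} := by
    have : {f : Fin n → ℕ | ∀ i, f i = v i} = ⋂ i, (fun f : Fin n → ℕ => f i) ⁻¹' {v i} := by
      ext f; simp [Set.mem_iInter]
    rw [this]
    exact MeasurableSet.iInter fun i => (measurable_pi_apply i) (measurableSet_singleton _)
  have h1 : Measurable (fun ω => fun i : Fin n => X ((σ⁻¹ : Equiv.Perm (Fin n)) i) ω) :=
    measurable_pi_lambda _ fun i => hXmeas _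
  have h2 : Measurable (fun ω => fun i : Fin n => X i ω) :=
    measurable_pi_lambda _ fun i => hXmeas _
  have key := hexch n σ⁻¹
  have e1 := Measure.map_apply (μ := P) h1 hT
  have e2 := Measure.map_apply (μ := P) h2 hT
  rw [key] at e1
  have hset1 : (fun ω => fun i : Fin n => X ((σ⁻¹ : Equiv.Perm (Fin n)) i) ω) ⁻¹'
      {f : Fin n → ℕ | ∀ i, f i = v i} = {ω | ∀ i : Fin n, X i ω = v (σ i)} := by
    ext ω
    simp only [Set.mem_preimage, Set.mem_setOf_eq]
    constructor
    · intro hh i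
      have := hh (σ i)
      simpa using this
    · intro hh i
      have := hh ((σ⁻¹ : Equiv.Perm (Fin n)) i)
      simpa using this
  have hset2 : (fun ω => fun i : Fin n => X i ω) ⁻¹'
      {f : Fin n → ℕ | ∀ i, f i = v i} = {ω | ∀ i : Fin n, X i ω = v i} := rfl
  rw [hset1] at e1
  rw [hset2] at e2
  rw [← e1, e2]

/-- patterns with the same number of ones have the same probability -/
lemma pat_card (hXmeas : ∀ k, Measurable (X k)) (hexch : Exchangeable P X)
    (n : ℕ) (v w : ℕ → ℕ) (hv : ∀ i, v i ≤ 1) (hw : ∀ i, w i ≤ 1)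
    (hc : (Finset.univ.filter (fun i : Fin n => v i = 1)).card =
          (Finset.univ.filter (fun i : Fin n => w i = 1)).card) :
    P {ω | ∀ i : Fin n, X i ω = v i} = P {ω | ∀ i : Fin n, X i ω = w i} := by
  obtain ⟨σ, hσ⟩ := exists_perm_finset
    (Finset.univ.filter (fun i : Fin n => v i = 1))
    (Finset.univ.filter (fun i : Fin n => w i = 1)) hc
  have hvw : ∀ i : Fin n, v (σ i) = w i := by
    intro i
    have := hσ i
    simp only [Finset.mem_filter, Finset.mem_univ, true_and] at this
    have h1 := hv (σ i)
    have h2 := hw i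
    omega
  have := pat_perm P X hXmeas hexch n σ (fun i : Fin n => v i)
  have heq : {ω | ∀ i : Fin n, X i ω = v (σ i)} = {ω | ∀ i : Fin n, X i ω = w i} := by
    ext ω; simp only [Set.mem_setOf_eq]
    constructor
    · intro hh i; rw [← hvw i]; exact hh i
    · intro hh i; rw [hvw i]; exact hh i
  rw [← heq, this]

lemma card_filter_lt (n h : ℕ) (hh : h ≤ n) :
    (Finset.univ.filter (fun i : Fin n => (i : ℕ) < h)).card = h := by
  have heq : Finset.univ.filter (fun i : Fin n => (i : ℕ) < h) =
      (Finset.range h).attachFin (fun m hm => lt_of_lt_of_le (Finset.mem_range.mp hm) hh) := by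
    ext i
    simp [Finset.mem_attachFin, Finset.mem_range]
  rw [heq, Finset.card_attachFin, Finset.card_range]

/-- value of the canonical pattern: first `h` ones then zeros -/
lemma pat_val (hX01 : ∀ k ω, X k ω ≤ 1) (hXmeas : ∀ k, Measurable (X k))
    (hexch : Exchangeable P X) [IsProbabilityMeasure P]
    (p : ℝ) (hp0 : 0 ≤ p) (hp1 : p ≤ 1)
    (hiter : ∀ h : ℕ, 1 ≤ h → (P {ω | ∀ i < h, X i ω = 1}).toReal = p ^ h) :
    ∀ m n h : ℕ, n = h + m →
      (P {ω | ∀ i : Fin n, X i ω = if (i : ℕ) < h then 1 else 0}).toReal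
        = p ^ h * (1 - p) ^ m := by
  intro m
  induction m with
  | zero =>
    intro n h hn
    obtain rfl : h = n := by omega
    simp only [pow_zero, mul_one]
    rcases Nat.eq_zero_or_pos h with h0 | h1
    · subst h0
      have : {ω : Ω | ∀ i : Fin 0, X i ω = if (i : ℕ) < 0 then 1 else 0} = Set.univ := by
        ext ω; simp
      rw [this, measure_univ]
      simp
    · have hs : {ω : Ω | ∀ i : Fin h, X i ω = if (i : ℕ) < h then 1 else 0}
          = {ω : Ω | ∀ i < h, X i ω = 1} := by
        ext ω
        simp only [Set.mem_setOf_eq]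
        constructor
        · intro hh i hi
          have := hh ⟨i, hi⟩
          simpa [hi] using this
        · intro hh i
          simpa [i.2] using hh i i.2
      rw [hs]
      exact hiter h h1
  | succ m ih =>
    intro n h hn
    -- n = h + m + 1 ; let n' = h + m
    set n' := h + m with hn'
    have hnn : n = n' + 1 := by omega
    subst hnn
    -- split the pattern of length n'
    have hsplit : {ω : Ω | ∀ i : Fin n', X i ω = if (i : ℕ) < h then 1 else 0}
        = {ω : Ω | ∀ i : Fin (n' + 1), X i ω = if (i : ℕ) < h then 1 else 0}
        ∪ {ω : Ω | ∀ i : Fin (n' + 1), X i ω = if (i : ℕ) < h ∨ (i : ℕ) = n' then 1 else 0} := by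
      ext ω
      simp only [Set.mem_setOf_eq, Set.mem_union]
      constructor
      · intro hh
        have hle := hX01 n' ω
        rcases Nat.le_one_iff_eq_zero_or_eq_one.mp hle with h0 | h1
        · left
          intro i
          rcases Nat.lt_succ_iff_lt_or_eq.mp i.2 with hi | hi
          · have := hh ⟨i, hi⟩
            simpa using this
          · have hnlt : ¬ ((i : ℕ) < h) := by omega
            have hnlt' : ¬ (n' < h) := by omega
            simp only [hnlt, if_false, hi, h0, hnlt']
        · right
          intro i
          rcases Nat.lt_succ_iff_lt_or_eq.mp i.2 with hi | hi
          · have hx := hh ⟨i, hi⟩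
            have hne : (i : ℕ) ≠ n' := by omega
            simp only [hne, or_false]
            simpa using hx
          · simp only [hi, h1, or_true, if_true]
      · intro hh i
        rcases hh with hh | hh
        · have := hh ⟨i, Nat.lt_succ_of_lt i.2⟩
          simpa using this
        · have hx := hh ⟨i, Nat.lt_succ_of_lt i.2⟩
          have hne : (i : ℕ) ≠ n' := by omega
          simp only [hne, or_false] at hx
          simpa using hx
    have hdisj : Disjoint
        {ω : Ω | ∀ i : Fin (n' + 1), X i ω = if (i : ℕ) < h then 1 else 0}
        {ω : Ω | ∀ i : Fin (n' + 1), X i ω = if (i : ℕ) < h ∨ (i : ℕ) = n' then 1 else 0} := by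
      rw [Set.disjoint_left]
      intro ω h1 h2
      have e1 := h1 ⟨n', Nat.lt_succ_self n'⟩
      have e2 := h2 ⟨n', Nat.lt_succ_self n'⟩
      have hnh : ¬ (n' < h) := by omega
      simp [hnh] at e1 e2
      omega
    have hmeas1 := pat_meas X hXmeas (n' + 1) (fun i => if i < h then 1 else 0)
    have hmeas2 := pat_meas X hXmeas (n' + 1) (fun i => if i < h ∨ i = n' then 1 else 0)
    have hadd : P {ω : Ω | ∀ i : Fin n', X i ω = if (i : ℕ) < h then 1 else 0}
        = P {ω : Ω | ∀ i : Fin (n' + 1), X i ω = if (i : ℕ) < h then 1 else 0}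
        + P {ω : Ω | ∀ i : Fin (n' + 1), X i ω = if (i : ℕ) < h ∨ (i : ℕ) = n' then 1 else 0} := by
      rw [hsplit]
      exact measure_union hdisj hmeas2
    -- second term equals canonical pattern with h+1 ones
    have hsecond : P {ω : Ω | ∀ i : Fin (n' + 1), X i ω = if (i : ℕ) < h ∨ (i : ℕ) = n' then 1 else 0}
        = P {ω : Ω | ∀ i : Fin (n' + 1), X i ω = if (i : ℕ) < h + 1 then 1 else 0} := by
      apply pat_card P X hXmeas hexch (n' + 1)
        (fun i => if i < h ∨ i = n' then 1 else 0) (fun i => if i < h + 1 then 1 else 0)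
      · intro i; split <;> omega
      · intro i; split <;> omega
      · have c1 : (Finset.univ.filter
            (fun i : Fin (n' + 1) => (if (i : ℕ) < h ∨ (i : ℕ) = n' then 1 else 0) = 1)).card
            = h + 1 := by
          have heq : Finset.univ.filter
              (fun i : Fin (n' + 1) => (if (i : ℕ) < h ∨ (i : ℕ) = n' then 1 else 0) = 1)
              = insert (Fin.last n') (Finset.univ.filter (fun i : Fin (n' + 1) => (i : ℕ) < h)) := by
            ext i
            simp only [Finset.mem_filter, Finset.mem_univ, true_and, Finset.mem_insert]
            constructor
            · intro hi
              by_cases hih : (i : ℕ) < h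
              · exact Or.inr hih
              · left
                have : (i : ℕ) = n' := by
                  by_contra hne
                  simp [hih, hne] at hi
                exact Fin.ext this
            · rintro (hi | hi)
              · subst hi
                simp [Fin.val_last]
              · simp [hi]
          rw [heq, Finset.card_insert_of_notMem, card_filter_lt (n' + 1) h (by omega)]
          simp only [Finset.mem_filter, Finset.mem_univ, true_and, Fin.val_last]
          omega
        have c2 : (Finset.univ.filter
            (fun i : Fin (n' + 1) => (if (i : ℕ) < h + 1 then 1 else 0) = 1)).card = h + 1 := by
          have heq : Finset.univ.filter
              (fun i : Fin (n' + 1) => (if (i : ℕ) < h + 1 then 1 else 0) = 1)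
              = Finset.univ.filter (fun i : Fin (n' + 1) => (i : ℕ) < h + 1) := by
            ext i
            simp only [Finset.mem_filter, Finset.mem_univ, true_and]
            split <;> simp_all
          rw [heq]
          exact card_filter_lt (n' + 1) (h + 1) (by omega)
        rw [c1, c2]
    -- apply IH twice
    have ih1 := ih n' h rfl
    have ih2 := ih (n' + 1) (h + 1) (by omega)
    have fin1 : P {ω : Ω | ∀ i : Fin (n' + 1), X i ω = if (i : ℕ) < h then 1 else 0} ≠ ⊤ :=
      measure_ne_top P _
    have fin2 : P {ω : Ω | ∀ i : Fin (n' + 1), X i ω = if (i : ℕ) < h ∨ (i : ℕ) = n' then 1 else 0} ≠ ⊤ :=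
      measure_ne_top P _
    have := congrArg ENNReal.toReal hadd
    rw [ENNReal.toReal_add fin1 fin2] at this
    rw [ih1] at this
    rw [hsecond] at this
    rw [ih2] at this
    have : (P {ω : Ω | ∀ i : Fin (n' + 1), X i ω = if (i : ℕ) < h then 1 else 0}).toReal
        = p ^ h * (1 - p) ^ m - p ^ (h + 1) * (1 - p) ^ m := by linarith
    rw [this]
    ring

end Aux

/-- if `P(X_0 = ⋯ = X_{h-1} = 1) = p^h` for every `h ≥ 1`, then the number of
successes in `n` trials is binomial: `ω_h^(n) = C(n,h) p^h (1-p)^{n-h}`. -/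
theorem deFinetti_stmt10 {Ω : Type*} [MeasurableSpace Ω] (P : Measure Ω)
    [IsProbabilityMeasure P] (X : ℕ → Ω → ℕ)
    (hX01 : ∀ k ω, X k ω ≤ 1) (hXmeas : ∀ k, Measurable (X k))
    (hexch : Exchangeable P X) (p : ℝ) (hp0 : 0 ≤ p) (hp1 : p ≤ 1)
    (hiter : ∀ h : ℕ, 1 ≤ h → (P {ω | ∀ i < h, X i ω = 1}).toReal = p ^ h) :
    ∀ n h : ℕ, 1 ≤ n → h ≤ n →
      succProb P X n h = (n.choose h : ℝ) * p ^ h * (1 - p) ^ (n - h) := by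
  intro n h hn hh
  -- event decomposition
  have hdecomp : {ω : Ω | ∑ i ∈ Finset.range n, X i ω = h}
      = ⋃ s ∈ Finset.powersetCard h (Finset.univ : Finset (Fin n)),
          {ω : Ω | ∀ i : Fin n, X i ω = if i ∈ s then 1 else 0} := by
    ext ω
    simp only [Set.mem_setOf_eq, Set.mem_iUnion, Finset.mem_powersetCard]
    constructor
    · intro hsum
      refine ⟨Finset.univ.filter (fun i : Fin n => X i ω = 1), ⟨⟨Finset.filter_subset _ _, ?_⟩, ?_⟩⟩
      · -- card = h
        have h1 : ∑ i ∈ Finset.range n, X i ω = ∑ i : Fin n, X i ω :=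
          Finset.sum_range fun i => X i ω
        have h2 : ∑ i : Fin n, X i ω = ∑ i : Fin n, if X i ω = 1 then 1 else 0 := by
          apply Finset.sum_congr rfl
          intro i _
          rcases Nat.le_one_iff_eq_zero_or_eq_one.mp (hX01 i ω) with h' | h' <;> simp [h']
        have h3 : (∑ i : Fin n, if X i ω = 1 then 1 else 0)
            = (Finset.univ.filter (fun i : Fin n => X i ω = 1)).card := by
          rw [Finset.sum_boole]
          simp
        omega
      · intro i
        by_cases hi : X i ω = 1 <;> simp only [Finset.mem_filter, Finset.mem_univ, true_and]
        · simp [hi]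
        · have := hX01 i ω
          simp only [hi, if_false]
          omega
    · rintro ⟨s, ⟨⟨-, hcard⟩, hpat⟩⟩
      have h1 : ∑ i ∈ Finset.range n, X i ω = ∑ i : Fin n, X i ω :=
        Finset.sum_range fun i => X i ω
      have h2 : ∑ i : Fin n, X i ω = ∑ i : Fin n, if i ∈ s then 1 else 0 := by
        apply Finset.sum_congr rfl
        intro i _
        exact hpat i
      have h3 : (∑ i : Fin n, if i ∈ s then 1 else 0) = s.card := by
        rw [Finset.sum_boole]
        simp [Finset.filter_mem_eq_inter]
      omega
  have hpairwise : (↑(Finset.powersetCard h (Finset.univ : Finset (Fin n))) :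
      Set (Finset (Fin n))).PairwiseDisjoint
      (fun s => {ω : Ω | ∀ i : Fin n, X i ω = if i ∈ s then 1 else 0}) := by
    intro s hs t ht hst
    rw [Function.onFun, Set.disjoint_left]
    intro ω h1 h2
    apply hst
    ext i
    have e1 := h1 i
    have e2 := h2 i
    constructor
    · intro hi
      simp only [hi, if_true] at e1
      by_contra hnt
      simp only [hnt, if_false] at e2
      omega
    · intro hi
      simp only [hi, if_true] at e2
      by_contra hnt
      simp only [hnt, if_false] at e1
      omega
  have hmeas : ∀ s ∈ Finset.powersetCard h (Finset.univ : Finset (Fin n)),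
      MeasurableSet {ω : Ω | ∀ i : Fin n, X i ω = if i ∈ s then 1 else 0} := by
    intro s _
    have : {ω : Ω | ∀ i : Fin n, X i ω = if i ∈ s then 1 else 0}
        = ⋂ i : Fin n, (X i) ⁻¹' {if i ∈ s then 1 else 0} := by
      ext ω; simp [Set.mem_iInter]
    rw [this]
    exact MeasurableSet.iInter fun i => (hXmeas i) (measurableSet_singleton _)
  have hsum : P {ω : Ω | ∑ i ∈ Finset.range n, X i ω = h}
      = ∑ s ∈ Finset.powersetCard h (Finset.univ : Finset (Fin n)),
          P {ω : Ω | ∀ i : Fin n, X i ω = if i ∈ s then 1 else 0} := by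
    rw [hdecomp]
    exact measure_biUnion_finset hpairwise hmeas
  -- each summand equals canonical pattern probability
  have hval := pat_val P X hX01 hXmeas hexch p hp0 hp1 hiter (n - h) n h (by omega)
  have heach : ∀ s ∈ Finset.powersetCard h (Finset.univ : Finset (Fin n)),
      P {ω : Ω | ∀ i : Fin n, X i ω = if i ∈ s then 1 else 0}
        = P {ω : Ω | ∀ i : Fin n, X i ω = if (i : ℕ) < h then 1 else 0} := by
    intro s hs
    simp only [Finset.mem_powersetCard] at hs
    classical
    set sval : Finset ℕ := s.image (Fin.val) with hsval
    have hmemval : ∀ i : Fin n, ((i : ℕ) ∈ sval ↔ i ∈ s) := by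
      intro i
      constructor
      · intro hi
        rw [hsval] at hi
        obtain ⟨j, hj, hje⟩ := Finset.mem_image.mp hi
        rwa [← Fin.ext hje]
      · intro hi
        exact Finset.mem_image.mpr ⟨i, hi, rfl⟩
    have hset1 : {ω : Ω | ∀ i : Fin n, X i ω = if i ∈ s then 1 else 0}
        = {ω : Ω | ∀ i : Fin n, X i ω = if (i : ℕ) ∈ sval then 1 else 0} := by
      ext ω
      simp only [Set.mem_setOf_eq]
      constructor
      · intro hh i; rw [if_congr (hmemval i) rfl rfl]; exact hh i
      · intro hh i; rw [← if_congr (hmemval i) rfl rfl]; exact hh i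
    rw [hset1]
    apply pat_card P X hXmeas hexch n (fun k => if k ∈ sval then 1 else 0)
      (fun k => if k < h then 1 else 0)
    · intro i; split <;> omega
    · intro i; split <;> omega
    · have c1 : (Finset.univ.filter (fun i : Fin n =>
          (if (i : ℕ) ∈ sval then (1:ℕ) else 0) = 1)).card = h := by
        have heq : Finset.univ.filter (fun i : Fin n =>
            (if (i : ℕ) ∈ sval then (1:ℕ) else 0) = 1) = s := by
          ext i
          simp only [Finset.mem_filter, Finset.mem_univ, true_and]
          rw [← hmemval i]
          split <;> simp_all
        rw [heq, hs.2]
      have c2 : (Finset.univ.filter (fun i : Fin n =>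
          (if (i : ℕ) < h then (1:ℕ) else 0) = 1)).card = h := by
        have heq : Finset.univ.filter (fun i : Fin n => (if (i : ℕ) < h then (1:ℕ) else 0) = 1)
            = Finset.univ.filter (fun i : Fin n => (i : ℕ) < h) := by
          ext i
          simp only [Finset.mem_filter, Finset.mem_univ, true_and]
          split <;> simp_all
        rw [heq]
        exact card_filter_lt n h hh
      rw [c1, c2]
  -- combine
  unfold succProb
  rw [hsum]
  rw [Finset.sum_congr rfl heach]
  rw [Finset.sum_const, Finset.card_powersetCard, Finset.card_univ, Fintype.card_fin]
  rw [nsmul_eq_mul, ENNReal.toReal_mul]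
  rw [hval]
  simp [mul_assoc]
end

section
/- Let X be an exchangeable sequence of {0,1}-valued random variables, let r, s ≥ 0 with P(X_0 + ⋯ + X_{r+s−1} = r) > 0. Then for every n ≥ 1 and 0 ≤ h ≤ n, the conditional probability that h of the next n trials are successes given that r of the first r+s trials were successes equals P(X_{r+s} + ⋯ + X_{r+s+n−1} = h | X_0 + ⋯ + X_{r+s−1} = r) = [C(h+r, r) · C(n−h+s, s) / C(n+r+s, n)] · ω_{h+r}^(n+r+s) / ω_r^(r+s). -/
open MeasureTheory ProbabilityTheory Filter

section Aux
variable {Ω : Type*} [MeasurableSpace Ω]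

/-- The event that the first `m` trials realize exactly the 0/1-pattern with ones at `S`. -/
def patSet (X : ℕ → Ω → ℕ) (m : ℕ) (S : Finset (Fin m)) : Set Ω :=
  {ω | ∀ i : Fin m, X (i : ℕ) ω = if i ∈ S then 1 else 0}

lemma patSet_meas (X : ℕ → Ω → ℕ) (hXmeas : ∀ k, Measurable (X k)) (m : ℕ)
    (S : Finset (Fin m)) : MeasurableSet (patSet X m S) := by
  have : patSet X m S = ⋂ i : Fin m, (X (i : ℕ)) ⁻¹' {if i ∈ S then 1 else 0} := by
    ext ω; simp [patSet, Set.mem_iInter]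
  rw [this]
  exact MeasurableSet.iInter fun i => (hXmeas _) (measurableSet_singleton _)

lemma mem_patSet_iff (X : ℕ → Ω → ℕ) (hX01 : ∀ k ω, X k ω ≤ 1) {m : ℕ}
    {S : Finset (Fin m)} {ω : Ω} :
    ω ∈ patSet X m S ↔ S = Finset.univ.filter (fun i : Fin m => X (i : ℕ) ω = 1) := by
  constructor
  · intro hω
    ext i
    simp only [Finset.mem_filter, Finset.mem_univ, true_and]
    constructor
    · intro hi; simpa [hi] using hω i
    · intro hi
      by_contra hiS
      have := hω i
      simp [hiS] at this
      omega
  · rintro rfl i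
    rcases Nat.le_one_iff_eq_zero_or_eq_one.mp (hX01 (i : ℕ) ω) with h0 | h1
    · simp [h0]
    · simp [h1]

lemma measure_event (P : Measure Ω) (X : ℕ → Ω → ℕ) (hX01 : ∀ k ω, X k ω ≤ 1)
    (hXmeas : ∀ k, Measurable (X k)) {m : ℕ}
    (E : Set Ω) (𝒮 : Finset (Finset (Fin m)))
    (hE : ∀ ω, ω ∈ E ↔ Finset.univ.filter (fun i : Fin m => X (i : ℕ) ω = 1) ∈ 𝒮) :
    P E = ∑ S ∈ 𝒮, P (patSet X m S) := by
  have hEeq : E = ⋃ S ∈ 𝒮, patSet X m S := by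
    ext ω
    simp only [Set.mem_iUnion, exists_prop]
    constructor
    · intro hω
      exact ⟨_, (hE ω).mp hω, (mem_patSet_iff X hX01).mpr rfl⟩
    · rintro ⟨S, hS, hωS⟩
      rw [hE ω, ← (mem_patSet_iff X hX01).mp hωS]
      exact hS
  rw [hEeq]
  refine measure_biUnion_finset ?_ (fun S _ => patSet_meas X hXmeas m S)
  intro S hS T hT hST
  refine Set.disjoint_left.mpr fun ω hωS hωT => hST ?_
  rw [(mem_patSet_iff X hX01).mp hωS, (mem_patSet_iff X hX01).mp hωT]

lemma patSet_measure_congr (P : Measure Ω) (X : ℕ → Ω → ℕ)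
    (hXmeas : ∀ k, Measurable (X k)) (hexch : Exchangeable P X) {m : ℕ}
    {S T : Finset (Fin m)} (hST : S.card = T.card) :
    P (patSet X m S) = P (patSet X m T) := by
  classical
  have hc : Fintype.card {x : Fin m // ¬ x ∈ S} = Fintype.card {x : Fin m // ¬ x ∈ T} := by
    simp only [Fintype.card_subtype]
    rw [show Finset.filter (fun x => x ∉ S) Finset.univ = Sᶜ by ext; simp,
      show Finset.filter (fun x => x ∉ T) Finset.univ = Tᶜ by ext; simp,
      Finset.card_compl, Finset.card_compl, hST]
  let e₁ : {x : Fin m // x ∈ S} ≃ {x : Fin m // x ∈ T} := Finset.equivOfCardEq hST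
  let e₂ : {x : Fin m // ¬ x ∈ S} ≃ {x : Fin m // ¬ x ∈ T} := Fintype.equivOfCardEq hc
  let σ : Equiv.Perm (Fin m) := Equiv.subtypeCongr e₁ e₂
  have hσ : ∀ i : Fin m, (σ i ∈ T ↔ i ∈ S) := by
    intro i
    by_cases hi : i ∈ S
    · simp only [σ, Equiv.subtypeCongr, Equiv.trans_apply, Equiv.sumCompl_symm_apply_of_pos hi,
        Equiv.sumCongr_apply, Sum.map_inl, Equiv.sumCompl_apply_inl]
      simpa [hi] using (e₁ ⟨i, hi⟩).2
    · simp only [σ, Equiv.subtypeCongr, Equiv.trans_apply, Equiv.sumCompl_symm_apply_of_neg hi,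
        Equiv.sumCongr_apply, Sum.map_inr, Equiv.sumCompl_apply_inr]
      simpa [hi] using (e₂ ⟨i, hi⟩).2
  have h1 := hexch m σ
  set K : Set (Fin m → ℕ) := {f | ∀ i, f i = if i ∈ S then 1 else 0} with hK
  have hKmeas : MeasurableSet K := by
    have : K = ⋂ i : Fin m, (fun f : Fin m → ℕ => f i) ⁻¹' {if i ∈ S then 1 else 0} := by
      ext f; simp [hK, Set.mem_iInter]
    rw [this]
    exact MeasurableSet.iInter fun i => (measurable_pi_apply i) (measurableSet_singleton _)
  have hm1 : Measurable (fun ω => fun i : Fin m => X ((σ i : Fin m) : ℕ) ω) :=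
    measurable_pi_lambda _ fun i => hXmeas _
  have hm2 : Measurable (fun ω => fun i : Fin m => X ((i : Fin m) : ℕ) ω) :=
    measurable_pi_lambda _ fun i => hXmeas _
  have h2 := congrArg (fun μ : Measure (Fin m → ℕ) => μ K) h1
  simp only [Measure.map_apply hm1 hKmeas, Measure.map_apply hm2 hKmeas] at h2
  have hpre1 : (fun ω => fun i : Fin m => X ((σ i : Fin m) : ℕ) ω) ⁻¹' K = patSet X m T := by
    ext ω
    simp only [Set.mem_preimage, hK, Set.mem_setOf_eq, patSet]
    constructor
    · intro hf j
      have := hf (σ.symm j)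
      rw [Equiv.apply_symm_apply] at this
      rw [this]
      congr 1
      rw [← hσ (σ.symm j), Equiv.apply_symm_apply]
    · intro hf i
      rw [hf (σ i)]
      congr 1
      exact propext (hσ i)
  have hpre2 : (fun ω => fun i : Fin m => X ((i : Fin m) : ℕ) ω) ⁻¹' K = patSet X m S := by
    ext ω; simp [hK, patSet]
  rw [hpre1, hpre2] at h2
  exact h2.symm

lemma measure_event_count (P : Measure Ω) (X : ℕ → Ω → ℕ) (hX01 : ∀ k ω, X k ω ≤ 1)
    (hXmeas : ∀ k, Measurable (X k)) (hexch : Exchangeable P X) {m : ℕ}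
    (E : Set Ω) (𝒮 : Finset (Finset (Fin m)))
    (hE : ∀ ω, ω ∈ E ↔ Finset.univ.filter (fun i : Fin m => X (i : ℕ) ω = 1) ∈ 𝒮)
    (S₀ : Finset (Fin m)) (hcard : ∀ S ∈ 𝒮, S.card = S₀.card) :
    P E = (𝒮.card : ENNReal) * P (patSet X m S₀) := by
  rw [measure_event P X hX01 hXmeas E 𝒮 hE,
    Finset.sum_congr rfl (fun S hS => patSet_measure_congr P X hXmeas hexch (hcard S hS)),
    Finset.sum_const, nsmul_eq_mul]

lemma sum_Ico_eq_card_filter (X : ℕ → Ω → ℕ) (hX01 : ∀ k ω, X k ω ≤ 1) {m : ℕ}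
    (a b : ℕ) (hb : b ≤ m) (ω : Ω) :
    ∑ i ∈ Finset.Ico a b, X i ω =
      (Finset.univ.filter
        (fun i : Fin m => X (i : ℕ) ω = 1 ∧ a ≤ (i : ℕ) ∧ (i : ℕ) < b)).card := by
  classical
  rw [Finset.card_filter]
  rw [Fin.sum_univ_eq_sum_range (fun i => if X i ω = 1 ∧ a ≤ i ∧ i < b then 1 else 0) m]
  have h1 : ∀ i : ℕ, (if X i ω = 1 ∧ a ≤ i ∧ i < b then 1 else 0) =
      (if a ≤ i ∧ i < b then (if X i ω = 1 then 1 else 0) else 0) := by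
    intro i; split_ifs <;> tauto
  rw [Finset.sum_congr rfl (fun i _ => h1 i), ← Finset.sum_filter]
  have h2 : (Finset.range m).filter (fun i => a ≤ i ∧ i < b) = Finset.Ico a b := by
    ext i; simp only [Finset.mem_filter, Finset.mem_range, Finset.mem_Ico]; omega
  rw [h2]
  refine (Finset.sum_congr rfl fun i _ => ?_).symm
  rcases Nat.le_one_iff_eq_zero_or_eq_one.mp (hX01 i ω) with hv | hv <;> simp [hv]

lemma sum_range_eq_card (X : ℕ → Ω → ℕ) (hX01 : ∀ k ω, X k ω ≤ 1) (m : ℕ) (ω : Ω) :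
    ∑ i ∈ Finset.range m, X i ω =
      (Finset.univ.filter (fun i : Fin m => X (i : ℕ) ω = 1)).card := by
  have := sum_Ico_eq_card_filter X hX01 0 m le_rfl ω
  rw [← Finset.range_eq_Ico] at this
  rw [this]
  congr 1
  ext i
  simp [i.isLt]

lemma card_filter_lt_fin (m k : ℕ) (hk : k ≤ m) :
    ((Finset.univ : Finset (Fin m)).filter (fun i : Fin m => (i : ℕ) < k)).card = k := by
  classical
  rw [Finset.card_filter]
  rw [Fin.sum_univ_eq_sum_range (fun i => if i < k then 1 else 0) m, ← Finset.sum_filter]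
  have h2 : (Finset.range m).filter (fun i => i < k) = Finset.range k := by
    ext i; simp only [Finset.mem_filter, Finset.mem_range]; omega
  rw [h2]
  simp

end Aux

lemma card_G (m r s n h : ℕ) (hm : m = n + r + s) :
    ((Finset.univ : Finset (Finset (Fin m))).filter
      (fun S => (S.filter (fun i : Fin m => (i : ℕ) < r + s)).card = r ∧
        (S.filter (fun i : Fin m => ¬ (i : ℕ) < r + s)).card = h)).card =
      (r + s).choose r * n.choose h := by
  classical
  set blockA : Finset (Fin m) := Finset.univ.filter (fun i : Fin m => (i : ℕ) < r + s) with hbA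
  set blockB : Finset (Fin m) := Finset.univ.filter (fun i : Fin m => ¬ (i : ℕ) < r + s) with hbB
  have hbAcard : blockA.card = r + s := card_filter_lt_fin m (r + s) (by omega)
  have hbBcard : blockB.card = n := by
    have := Finset.card_filter_add_card_filter_not
      (s := (Finset.univ : Finset (Fin m))) (p := fun i : Fin m => (i : ℕ) < r + s)
    rw [← hbA, ← hbB] at this
    simp only [Finset.card_univ, Fintype.card_fin] at this
    omega
  have key : ((Finset.univ : Finset (Finset (Fin m))).filter
      (fun S => (S.filter (fun i : Fin m => (i : ℕ) < r + s)).card = r ∧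
        (S.filter (fun i : Fin m => ¬ (i : ℕ) < r + s)).card = h)).card =
      ((blockA.powersetCard r) ×ˢ (blockB.powersetCard h)).card := by
    refine Finset.card_bij'
      (fun S _ => (S.filter (fun i : Fin m => (i : ℕ) < r + s),
        S.filter (fun i : Fin m => ¬ (i : ℕ) < r + s)))
      (fun p _ => p.1 ∪ p.2) ?_ ?_ ?_ ?_
    · intro S hS
      simp only [Finset.mem_filter, Finset.mem_univ, true_and] at hS
      simp only [Finset.mem_product, Finset.mem_powersetCard]
      exact ⟨⟨Finset.filter_subset_filter _ (Finset.subset_univ S), hS.1⟩,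
        ⟨Finset.filter_subset_filter _ (Finset.subset_univ S), hS.2⟩⟩
    · intro p hp
      simp only [Finset.mem_product, Finset.mem_powersetCard] at hp
      obtain ⟨⟨h1sub, h1card⟩, h2sub, h2card⟩ := hp
      have hA1 : p.1.filter (fun i : Fin m => (i : ℕ) < r + s) = p.1 :=
        Finset.filter_true_of_mem fun i hi => by
          have := h1sub hi; rw [hbA] at this
          simpa using (Finset.mem_filter.mp this).2
      have hA2 : p.2.filter (fun i : Fin m => (i : ℕ) < r + s) = ∅ :=
        Finset.filter_false_of_mem fun i hi => by
          have := h2sub hi; rw [hbB] at this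
          simpa using (Finset.mem_filter.mp this).2
      have hB1 : p.1.filter (fun i : Fin m => ¬ (i : ℕ) < r + s) = ∅ :=
        Finset.filter_false_of_mem fun i hi => by
          have := h1sub hi; rw [hbA] at this
          simpa using (Finset.mem_filter.mp this).2
      have hB2 : p.2.filter (fun i : Fin m => ¬ (i : ℕ) < r + s) = p.2 :=
        Finset.filter_true_of_mem fun i hi => by
          have := h2sub hi; rw [hbB] at this
          simpa using (Finset.mem_filter.mp this).2
      simp only [Finset.mem_filter, Finset.mem_univ, true_and, Finset.filter_union,
        hA1, hA2, hB1, hB2, Finset.union_empty, Finset.empty_union]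
      exact ⟨h1card, h2card⟩
    · intro S hS
      exact Finset.filter_union_filter_not_eq _ S
    · intro p hp
      simp only [Finset.mem_product, Finset.mem_powersetCard] at hp
      obtain ⟨⟨h1sub, h1card⟩, h2sub, h2card⟩ := hp
      have hA1 : p.1.filter (fun i : Fin m => (i : ℕ) < r + s) = p.1 :=
        Finset.filter_true_of_mem fun i hi => by
          have := h1sub hi; rw [hbA] at this
          simpa using (Finset.mem_filter.mp this).2
      have hA2 : p.2.filter (fun i : Fin m => (i : ℕ) < r + s) = ∅ :=
        Finset.filter_false_of_mem fun i hi => by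
          have := h2sub hi; rw [hbB] at this
          simpa using (Finset.mem_filter.mp this).2
      have hB1 : p.1.filter (fun i : Fin m => ¬ (i : ℕ) < r + s) = ∅ :=
        Finset.filter_false_of_mem fun i hi => by
          have := h1sub hi; rw [hbA] at this
          simpa using (Finset.mem_filter.mp this).2
      have hB2 : p.2.filter (fun i : Fin m => ¬ (i : ℕ) < r + s) = p.2 :=
        Finset.filter_true_of_mem fun i hi => by
          have := h2sub hi; rw [hbB] at this
          simpa using (Finset.mem_filter.mp this).2
      simp only [Finset.filter_union, hA1, hA2, hB1, hB2, Finset.union_empty,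
        Finset.empty_union]
  rw [key, Finset.card_product, Finset.card_powersetCard, Finset.card_powersetCard,
    hbAcard, hbBcard]

open scoped Nat in
lemma choose_identity (h d r s : ℕ) :
    ((r + s).choose r : ℝ) * ((h + d).choose h) * ((h + d + r + s).choose (h + d)) =
      ((h + r).choose r : ℝ) * ((d + s).choose s) * ((h + d + r + s).choose (h + r)) := by
  have e1 : ((r + s).choose r : ℝ) = Nat.factorial (r + s) / (Nat.factorial r * Nat.factorial s) := by
    rw [Nat.cast_choose ℝ (by omega), show r + s - r = s from by omega]
  have e2 : ((h + d).choose h : ℝ) = Nat.factorial (h + d) / (Nat.factorial h * Nat.factorial d) := by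
    rw [Nat.cast_choose ℝ (by omega), show h + d - h = d from by omega]
  have e3 : ((h + d + r + s).choose (h + d) : ℝ) = Nat.factorial (h + d + r + s) / (Nat.factorial (h + d) * Nat.factorial (r + s)) := by
    rw [Nat.cast_choose ℝ (by omega), show h + d + r + s - (h + d) = r + s from by omega]
  have e4 : ((h + r).choose r : ℝ) = Nat.factorial (h + r) / (Nat.factorial r * Nat.factorial h) := by
    rw [Nat.cast_choose ℝ (by omega), show h + r - r = h from by omega]
  have e5 : ((d + s).choose s : ℝ) = Nat.factorial (d + s) / (Nat.factorial s * Nat.factorial d) := by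
    rw [Nat.cast_choose ℝ (by omega), show d + s - s = d from by omega]
  have e6 : ((h + d + r + s).choose (h + r) : ℝ) = Nat.factorial (h + d + r + s) / (Nat.factorial (h + r) * Nat.factorial (d + s)) := by
    rw [Nat.cast_choose ℝ (by omega), show h + d + r + s - (h + r) = d + s from by omega]
  have nz : ∀ k : ℕ, ((Nat.factorial k : ℝ) ≠ 0) := fun k => Nat.cast_ne_zero.mpr (Nat.factorial_ne_zero k)
  rw [e1, e2, e3, e4, e5, e6]
  field_simp

/-- for `r, s ≥ 0` with `P(X_0 + ⋯ + X_{r+s-1} = r) > 0`, for every `n ≥ 1` and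
`h ≤ n`, the conditional probability of `h` successes in the `n` trials following the first
`r + s` trials, given `r` successes among the first `r + s` trials, equals
`[C(h+r,r) C(n-h+s,s) / C(n+r+s,n)] ⬝ ω_{h+r}^(n+r+s) / ω_r^(r+s)`. -/
theorem deFinetti_stmt12 {Ω : Type*} [MeasurableSpace Ω] (P : Measure Ω)
    [IsProbabilityMeasure P] (X : ℕ → Ω → ℕ)
    (hX01 : ∀ k ω, X k ω ≤ 1) (hXmeas : ∀ k, Measurable (X k))
    (hexch : Exchangeable P X) (r s : ℕ)
    (hpos : 0 < succProb P X (r + s) r) (n : ℕ) (hn : 1 ≤ n) (h : ℕ) (hh : h ≤ n) :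
    ((P[|{ω | ∑ i ∈ Finset.range (r + s), X i ω = r}])
        {ω | ∑ i ∈ Finset.range n, X (r + s + i) ω = h}).toReal =
      ((h + r).choose r : ℝ) * ((n - h + s).choose s : ℝ) / ((n + r + s).choose n : ℝ) *
        succProb P X (n + r + s) (h + r) / succProb P X (r + s) r := by
  classical
  obtain ⟨d, rfl⟩ : ∃ d, n = h + d := ⟨n - h, by omega⟩
  set A : Set Ω := {ω | ∑ i ∈ Finset.range (r + s), X i ω = r} with hA
  set B : Set Ω := {ω | ∑ i ∈ Finset.range (h + d), X (r + s + i) ω = h} with hB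
  have hAmeas : MeasurableSet A := by
    have hmm : Measurable fun ω => ∑ i ∈ Finset.range (r + s), X i ω :=
      Finset.measurable_sum _ fun i _ => hXmeas i
    exact hmm (measurableSet_singleton r)
  -- the event A
  obtain ⟨S₀, -, hS₀⟩ := Finset.exists_subset_card_eq (s := (Finset.univ : Finset (Fin (r + s)))) (n := r)
    (by simp only [Finset.card_univ, Fintype.card_fin]; omega)
  have hPA : P A = (((r + s).choose r : ℕ) : ENNReal) * P (patSet X (r + s) S₀) := by
    have hE : ∀ ω, ω ∈ A ↔ Finset.univ.filter (fun i : Fin (r + s) => X (i : ℕ) ω = 1) ∈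
        Finset.powersetCard r (Finset.univ : Finset (Fin (r + s))) := by
      intro ω
      rw [hA, Set.mem_setOf_eq, Finset.mem_powersetCard_univ,
        sum_range_eq_card X hX01 (r + s) ω]
    have := measure_event_count P X hX01 hXmeas hexch A _ hE S₀
      (fun S hS => (Finset.mem_powersetCard_univ.mp hS).trans hS₀.symm)
    rw [this, Finset.card_powersetCard, Finset.card_univ, Fintype.card_fin]
  -- the event of h + r successes among the first (h+d)+r+s trials
  obtain ⟨T₀, -, hT₀⟩ := Finset.exists_subset_card_eq (s := (Finset.univ : Finset (Fin (h + d + r + s))))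
    (n := h + r) (by simp only [Finset.card_univ, Fintype.card_fin]; omega)
  set D : Set Ω := {ω | ∑ i ∈ Finset.range (h + d + r + s), X i ω = h + r} with hD
  have hPD : P D = (((h + d + r + s).choose (h + r) : ℕ) : ENNReal) *
      P (patSet X (h + d + r + s) T₀) := by
    have hE : ∀ ω, ω ∈ D ↔
        Finset.univ.filter (fun i : Fin (h + d + r + s) => X (i : ℕ) ω = 1) ∈
        Finset.powersetCard (h + r) (Finset.univ : Finset (Fin (h + d + r + s))) := by
      intro ω
      rw [hD, Set.mem_setOf_eq, Finset.mem_powersetCard_univ,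
        sum_range_eq_card X hX01 (h + d + r + s) ω]
    have := measure_event_count P X hX01 hXmeas hexch D _ hE T₀
      (fun S hS => (Finset.mem_powersetCard_univ.mp hS).trans hT₀.symm)
    rw [this, Finset.card_powersetCard, Finset.card_univ, Fintype.card_fin]
  -- the event A ∩ B
  set G : Finset (Finset (Fin (h + d + r + s))) :=
    (Finset.univ : Finset (Finset (Fin (h + d + r + s)))).filter
      (fun S => (S.filter (fun i : Fin (h + d + r + s) => (i : ℕ) < r + s)).card = r ∧
        (S.filter (fun i : Fin (h + d + r + s) => ¬ (i : ℕ) < r + s)).card = h) with hG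
  have hPAB : P (A ∩ B) = (((r + s).choose r * (h + d).choose h : ℕ) : ENNReal) *
      P (patSet X (h + d + r + s) T₀) := by
    have hE : ∀ ω, ω ∈ A ∩ B ↔
        Finset.univ.filter (fun i : Fin (h + d + r + s) => X (i : ℕ) ω = 1) ∈ G := by
      intro ω
      have hsum1 : ∑ i ∈ Finset.range (r + s), X i ω =
          ((Finset.univ.filter (fun i : Fin (h + d + r + s) => X (i : ℕ) ω = 1)).filter
            (fun i : Fin (h + d + r + s) => (i : ℕ) < r + s)).card := by
        rw [Finset.filter_filter, Finset.range_eq_Ico,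
          sum_Ico_eq_card_filter X hX01 (m := h + d + r + s) 0 (r + s) (by omega) ω]
        congr 1
        ext i
        simp only [Finset.mem_filter, Finset.mem_univ, true_and]
        constructor
        · rintro ⟨h1, h2, h3⟩; exact ⟨h1, h3⟩
        · rintro ⟨h1, h2⟩; exact ⟨h1, by omega, h2⟩
      have hsum2 : ∑ i ∈ Finset.range (h + d), X (r + s + i) ω =
          ((Finset.univ.filter (fun i : Fin (h + d + r + s) => X (i : ℕ) ω = 1)).filter
            (fun i : Fin (h + d + r + s) => ¬ (i : ℕ) < r + s)).card := by
        have e : ∑ i ∈ Finset.range (h + d), X (r + s + i) ω =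
            ∑ i ∈ Finset.Ico (r + s) (r + s + (h + d)), X i ω := by
          rw [Finset.sum_Ico_eq_sum_range]
          simp only [Nat.add_sub_cancel_left]
        rw [e, sum_Ico_eq_card_filter X hX01 (m := h + d + r + s) (r + s) (r + s + (h + d)) (by omega) ω,
          Finset.filter_filter]
        congr 1
        ext i
        simp only [Finset.mem_filter, Finset.mem_univ, true_and]
        have hi := i.isLt
        constructor
        · rintro ⟨h1, h2, h3⟩; exact ⟨h1, by omega⟩
        · rintro ⟨h1, h2⟩; exact ⟨h1, by omega, by omega⟩
      rw [Set.mem_inter_iff, hA, hB, Set.mem_setOf_eq, Set.mem_setOf_eq, hsum1, hsum2, hG]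
      simp only [Finset.mem_filter, Finset.mem_univ, true_and]
    have hcard : ∀ S ∈ G, S.card = T₀.card := by
      intro S hS
      rw [hG] at hS
      simp only [Finset.mem_filter, Finset.mem_univ, true_and] at hS
      have hsplit := Finset.card_filter_add_card_filter_not
        (s := S) (p := fun i : Fin (h + d + r + s) => (i : ℕ) < r + s)
      rw [hT₀]
      omega
    have := measure_event_count P X hX01 hXmeas hexch (A ∩ B) G hE T₀ hcard
    rw [this, hG, card_G (h + d + r + s) r s (h + d) h (by omega)]
  -- positivity facts
  simp only [succProb] at hpos ⊢
  rw [← hA, ← hD] at *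
  have hPAfin : P A ≠ ⊤ := measure_ne_top P A
  have hPAne : P A ≠ 0 := by
    intro h0
    rw [h0] at hpos
    simp at hpos
  rw [cond_apply hAmeas, ENNReal.toReal_mul, ENNReal.toReal_inv, hPA, hPAB, hPD,
    ENNReal.toReal_mul, ENNReal.toReal_mul, ENNReal.toReal_mul, ENNReal.toReal_natCast,
    ENNReal.toReal_natCast, ENNReal.toReal_natCast]
  set qR := (P (patSet X (r + s) S₀)).toReal with hqR
  set pR := (P (patSet X (h + d + r + s) T₀)).toReal with hpR
  have hqpos : 0 < qR := by
    rw [hPA, ENNReal.toReal_mul, ENNReal.toReal_natCast] at hpos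
    by_contra hq
    push_neg at hq
    have : qR = 0 := le_antisymm hq ENNReal.toReal_nonneg
    rw [← hqR] at hpos
    rw [this] at hpos
    simp at hpos
  have hsub : h + d - h = d := by omega
  rw [hsub]
  have hC1 : (0 : ℝ) < ((r + s).choose r : ℕ) := by
    exact_mod_cast Nat.choose_pos (by omega : r ≤ r + s)
  have hC5 : (0 : ℝ) < ((h + d + r + s).choose (h + d) : ℕ) := by
    exact_mod_cast Nat.choose_pos (by omega : h + d ≤ h + d + r + s)
  have key := choose_identity h d r s
  push_cast
  push_cast at key
  field_simp
  linear_combination pR * key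
end

section
/- (Bayesian updating of the mixing measure) Let X be an exchangeable sequence of {0,1}-valued random variables with de Finetti measure μ, let r, s ≥ 0, and suppose Z := ∫₀¹ ξ^r (1−ξ)^s dμ(ξ) > 0 (equivalently, P(X_0 + ⋯ + X_{r+s−1} = r) > 0). Then, under the conditional probability measure P(· | X_0 + ⋯ + X_{r+s−1} = r), the shifted sequence (X_{r+s+k})_{k≥0} is exchangeable and the probability measure μ' on [0,1] with density ξ ↦ ξ^r (1−ξ)^s / Z with respect to μ is a de Finetti measure for it. -/
open MeasureTheory ProbabilityTheory Filter

/-- A probability measure `μ` on `[0,1]` is a de Finetti measure for the sequence `X` if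
`ω_h^(n) = C(n,h) ∫₀¹ ξ^h (1-ξ)^{n-h} dμ(ξ)` for all `1 ≤ n` and `h ≤ n`. -/
def IsDeFinettiMeasure {Ω : Type*} [MeasurableSpace Ω] (P : Measure Ω)
    (X : ℕ → Ω → ℕ) (μ : Measure ℝ) : Prop :=
  IsProbabilityMeasure μ ∧ μ (Set.Icc (0:ℝ) 1)ᶜ = 0 ∧
    ∀ n h : ℕ, 1 ≤ n → h ≤ n →
      succProb P X n h =
        (n.choose h : ℝ) * ∫ ξ in Set.Icc (0:ℝ) 1, ξ ^ h * (1 - ξ) ^ (n - h) ∂μ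


open scoped NNReal ENNReal

lemma perm_of_card_eq {α : Type*} [Fintype α] [DecidableEq α] {S T : Finset α}
    (h : S.card = T.card) : ∃ σ : Equiv.Perm α, ∀ i, σ i ∈ T ↔ i ∈ S := by
  have hc : Sᶜ.card = Tᶜ.card := by simp [Finset.card_compl, h]
  let e : {x // x ∈ S} ≃ {x // x ∈ T} := S.equivOfCardEq (t := T) h
  let f : {x // ¬ x ∈ S} ≃ {x // ¬ x ∈ T} :=
    ((Equiv.subtypeEquivRight (fun x => (Finset.mem_compl (s := S)).symm)).trans
      (Sᶜ.equivOfCardEq hc)).trans (Equiv.subtypeEquivRight (fun x => Finset.mem_compl))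
  refine ⟨Equiv.subtypeCongr e f, fun i => ?_⟩
  by_cases hi : i ∈ S
  · simp only [Equiv.subtypeCongr, Equiv.trans_apply, Equiv.sumCompl_symm_apply_of_pos hi,
      Equiv.sumCongr_apply, Sum.map_inl, Equiv.sumCompl_apply_inl]
    exact iff_of_true (e ⟨i, hi⟩).2 hi
  · simp only [Equiv.subtypeCongr, Equiv.trans_apply, Equiv.sumCompl_symm_apply_of_neg hi,
      Equiv.sumCongr_apply, Sum.map_inr, Equiv.sumCompl_apply_inr]
    exact iff_of_false (f ⟨i, hi⟩).2 hi

section Patt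

variable {Ω : Type*} [MeasurableSpace Ω] (X : ℕ → Ω → ℕ)

/-- the event that the binary pattern of `(X_off, …, X_{off+n-1})` is the indicator of `S`. -/
def pattE (off n : ℕ) (S : Finset (Fin n)) : Set Ω :=
  {ω | ∀ i : Fin n, X (off + (i : ℕ)) ω = if i ∈ S then 1 else 0}

lemma pattE_meas (hXmeas : ∀ k, Measurable (X k)) (off n : ℕ) (S : Finset (Fin n)) :
    MeasurableSet (pattE X off n S) := by
  have : pattE X off n S =
      ⋂ i : Fin n, (X (off + (i:ℕ))) ⁻¹' {if i ∈ S then 1 else 0} := by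
    ext ω; simp [pattE, Set.mem_iInter]
  rw [this]
  exact MeasurableSet.iInter fun i => (hXmeas _) (measurableSet_singleton _)

lemma pattE_disj (off n : ℕ) {S T : Finset (Fin n)} (hST : S ≠ T) :
    Disjoint (pattE X off n S) (pattE X off n T) := by
  rw [Set.disjoint_left]
  intro ω h1 h2
  apply hST
  ext i
  have := (h1 i).symm.trans (h2 i)
  by_cases hS : i ∈ S <;> by_cases hT : i ∈ T <;> simp_all

lemma sum_event_eq (hX01 : ∀ k ω, X k ω ≤ 1) (off n h : ℕ) :
    {ω : Ω | ∑ i ∈ Finset.range n, X (off + i) ω = h} =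
      ⋃ S ∈ Finset.powersetCard h (Finset.univ : Finset (Fin n)), pattE X off n S := by
  ext ω
  simp only [Set.mem_setOf_eq, Set.mem_iUnion, Finset.mem_powersetCard_univ, exists_prop]
  have hrw : ∑ i ∈ Finset.range n, X (off + i) ω = ∑ i : Fin n, X (off + (i:ℕ)) ω :=
    (Fin.sum_univ_eq_sum_range (fun i => X (off + i) ω) n).symm
  constructor
  · intro hω
    refine ⟨Finset.univ.filter (fun i : Fin n => X (off + (i:ℕ)) ω = 1), ?_, ?_⟩
    · rw [Finset.card_filter]
      rw [hrw] at hω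
      rw [← hω]
      refine Finset.sum_congr rfl fun i _ => ?_
      have := hX01 (off + (i:ℕ)) ω
      interval_cases (X (off + (i:ℕ)) ω) <;> simp
    · intro i
      simp only [Finset.mem_filter, Finset.mem_univ, true_and]
      have := hX01 (off + (i:ℕ)) ω
      interval_cases (X (off + (i:ℕ)) ω) <;> simp
  · rintro ⟨S, hcard, hpatt⟩
    rw [hrw]
    have : ∑ i : Fin n, X (off + (i:ℕ)) ω = ∑ i : Fin n, if i ∈ S then 1 else 0 :=
      Finset.sum_congr rfl fun i _ => hpatt i
    rw [this, Finset.sum_ite_mem, Finset.univ_inter, Finset.sum_const, smul_eq_mul, mul_one,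
      hcard]

lemma prob_sum_event (P : Measure Ω) (hXmeas : ∀ k, Measurable (X k))
    (hX01 : ∀ k ω, X k ω ≤ 1) (off n h : ℕ) :
    P {ω : Ω | ∑ i ∈ Finset.range n, X (off + i) ω = h} =
      ∑ S ∈ Finset.powersetCard h (Finset.univ : Finset (Fin n)), P (pattE X off n S) := by
  rw [sum_event_eq X hX01 off n h]
  refine measure_biUnion_finset ?_ (fun S _ => pattE_meas X hXmeas off n S)
  intro S _ T _ hST
  exact pattE_disj X off n hST

end Patt

section Exch
variable {Ω : Type*} [MeasurableSpace Ω] (X : ℕ → Ω → ℕ) (P : Measure Ω)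

lemma exch_pre (hexch : Exchangeable P X) (hXmeas : ∀ k, Measurable (X k)) (n : ℕ)
    (σ : Equiv.Perm (Fin n)) {D : Set (Fin n → ℕ)} (hD : MeasurableSet D) :
    P ((fun ω => fun i : Fin n => X (σ i) ω) ⁻¹' D) =
      P ((fun ω => fun i : Fin n => X i ω) ⁻¹' D) := by
  have h1 : Measurable (fun ω => fun i : Fin n => X (σ i) ω) :=
    measurable_pi_lambda _ fun i => hXmeas _
  have h2 : Measurable (fun ω => fun i : Fin n => X i ω) :=
    measurable_pi_lambda _ fun i => hXmeas _
  rw [← Measure.map_apply h1 hD, ← Measure.map_apply h2 hD, hexch n σ]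

lemma patt_prob_congr (hexch : Exchangeable P X) (hXmeas : ∀ k, Measurable (X k))
    {n : ℕ} {S T : Finset (Fin n)} (hST : S.card = T.card) :
    P (pattE X 0 n S) = P (pattE X 0 n T) := by
  obtain ⟨τ, hτ⟩ := perm_of_card_eq (hST.symm : T.card = S.card)
  set σ := τ.symm with hσ
  have hD : MeasurableSet ({fun i : Fin n => if i ∈ S then (1:ℕ) else 0} : Set (Fin n → ℕ)) :=
    measurableSet_singleton _
  have key := exch_pre X P hexch hXmeas n σ hD
  have e1 : (fun ω => fun i : Fin n => X (σ i) ω) ⁻¹'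
      ({fun i : Fin n => if i ∈ S then (1:ℕ) else 0} : Set (Fin n → ℕ)) = pattE X 0 n T := by
    ext ω
    simp only [Set.mem_preimage, Set.mem_singleton_iff, funext_iff, pattE, Set.mem_setOf_eq,
      Nat.zero_add]
    constructor
    · intro H j
      have := H (τ j)
      rwa [hσ, Equiv.symm_apply_apply, if_congr (hτ j) rfl rfl] at this
    · intro H i
      have hiff : σ i ∈ T ↔ i ∈ S := by
        have := hτ (σ i)
        rw [hσ, Equiv.apply_symm_apply] at this
        exact this.symm
      rw [H (σ i), if_congr hiff rfl rfl]
  have e2 : (fun ω => fun i : Fin n => X i ω) ⁻¹'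
      ({fun i : Fin n => if i ∈ S then (1:ℕ) else 0} : Set (Fin n → ℕ)) = pattE X 0 n S := by
    ext ω
    simp [Set.mem_preimage, funext_iff, pattE, Nat.zero_add]
  rw [e1, e2] at key
  exact key.symm
end Exch

section Value
variable {Ω : Type*} [MeasurableSpace Ω] (X : ℕ → Ω → ℕ) (P : Measure Ω)
  [IsProbabilityMeasure P] (μ : Measure ℝ)

lemma mu_Icc_eq_one (hμ : IsDeFinettiMeasure P X μ) : μ (Set.Icc (0:ℝ) 1) = 1 := by
  have h1 : IsProbabilityMeasure μ := hμ.1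
  have := measure_add_measure_compl (μ := μ) (measurableSet_Icc (a := (0:ℝ)) (b := 1))
  rw [hμ.2.1, add_zero] at this
  rw [this, measure_univ]

lemma patt_prob_toReal (hX01 : ∀ k ω, X k ω ≤ 1) (hXmeas : ∀ k, Measurable (X k))
    (hexch : Exchangeable P X) (hμ : IsDeFinettiMeasure P X μ)
    (n : ℕ) (S : Finset (Fin n)) :
    (P (pattE X 0 n S)).toReal =
      ∫ ξ in Set.Icc (0:ℝ) 1, ξ ^ S.card * (1 - ξ) ^ (n - S.card) ∂μ := by
  rcases Nat.eq_zero_or_pos n with rfl | hn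
  · have hS : S = ∅ := Finset.eq_empty_of_isEmpty S
    subst hS
    have h1 : pattE X 0 0 (∅ : Finset (Fin 0)) = Set.univ := by
      ext ω; simp [pattE]
    rw [h1, measure_univ]
    simp only [Finset.card_empty, pow_zero, Nat.zero_sub, one_mul, ENNReal.toReal_one]
    rw [setIntegral_const, smul_eq_mul, mul_one, measureReal_def, mu_Icc_eq_one X P μ hμ, ENNReal.toReal_one]
  · set h := S.card with hh
    have hhn : h ≤ n := by
      rw [hh]; exact le_trans (Finset.card_le_univ S) (by simp)
    have hkey := hμ.2.2 n h hn hhn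
    unfold succProb at hkey
    have hev : {ω : Ω | ∑ i ∈ Finset.range n, X i ω = h} =
        {ω : Ω | ∑ i ∈ Finset.range n, X (0 + i) ω = h} := by
      simp only [Nat.zero_add]
    rw [hev, prob_sum_event X P hXmeas hX01 0 n h] at hkey
    have hconst : ∀ T ∈ Finset.powersetCard h (Finset.univ : Finset (Fin n)),
        P (pattE X 0 n T) = P (pattE X 0 n S) := by
      intro T hT
      rw [Finset.mem_powersetCard_univ] at hT
      exact patt_prob_congr X P hexch hXmeas (hT.trans hh)
    rw [Finset.sum_congr rfl hconst, Finset.sum_const, Finset.card_powersetCard,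
      Finset.card_univ, Fintype.card_fin, nsmul_eq_mul, ENNReal.toReal_mul,
      ENNReal.toReal_natCast] at hkey
    have hch : (0:ℝ) < (n.choose h : ℝ) := by
      exact_mod_cast Nat.choose_pos hhn
    exact mul_left_cancel₀ (ne_of_gt hch) hkey

end Value

section Joint
variable {Ω : Type*} [MeasurableSpace Ω] (X : ℕ → Ω → ℕ)

lemma pattE_inter (m n : ℕ) (S : Finset (Fin m)) (T : Finset (Fin n)) :
    pattE X 0 m S ∩ pattE X m n T =
      pattE X 0 (m + n) (S.map (Fin.castAddEmb n) ∪ T.map (Fin.natAddEmb m)) := by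
  have hmemS : ∀ i : Fin m, (Fin.castAdd n i ∈ S.map (Fin.castAddEmb n) ∪ T.map (Fin.natAddEmb m))
      ↔ i ∈ S := by
    intro i
    simp only [Finset.mem_union, Finset.mem_map, Fin.castAddEmb, Fin.natAddEmb]
    constructor
    · rintro (⟨a, ha, hae⟩ | ⟨a, ha, hae⟩)
      · have : a = i := by
          apply Fin.ext
          have := congrArg (Fin.val) hae
          simpa using this
        rwa [← this]
      · exfalso
        have := congrArg (Fin.val) hae
        simp [Fin.coe_castAdd, Fin.coe_natAdd, Function.Embedding.coeFn_mk, Fin.castLEEmb_apply] at this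
        dsimp only [DFunLike.coe] at this
        simp at this
        omega
    · intro hi; exact Or.inl ⟨i, hi, rfl⟩
  have hmemT : ∀ j : Fin n, (Fin.natAdd m j ∈ S.map (Fin.castAddEmb n) ∪ T.map (Fin.natAddEmb m))
      ↔ j ∈ T := by
    intro j
    simp only [Finset.mem_union, Finset.mem_map, Fin.castAddEmb, Fin.natAddEmb]
    constructor
    · rintro (⟨a, ha, hae⟩ | ⟨a, ha, hae⟩)
      · exfalso
        have := congrArg (Fin.val) hae
        simp [Fin.coe_castAdd, Fin.coe_natAdd] at this
        omega
      · have : a = j := by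
          apply Fin.ext
          have := congrArg (Fin.val) hae
          simp [Fin.coe_natAdd, Function.Embedding.coeFn_mk] at this
          dsimp only [DFunLike.coe] at this
          simp at this
          omega
        rwa [← this]
    · intro hj; exact Or.inr ⟨j, hj, rfl⟩
  ext ω
  simp only [pattE, Set.mem_inter_iff, Set.mem_setOf_eq, Nat.zero_add]
  constructor
  · rintro ⟨h1, h2⟩ k
    refine Fin.addCases (fun i => ?_) (fun j => ?_) k
    · rw [if_congr (hmemS i) rfl rfl]
      simpa using h1 i
    · rw [if_congr (hmemT j) rfl rfl]
      simpa using h2 j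
  · intro H
    constructor
    · intro i
      have := H (Fin.castAdd n i)
      rw [if_congr (hmemS i) rfl rfl] at this
      simpa using this
    · intro j
      have := H (Fin.natAdd m j)
      rw [if_congr (hmemT j) rfl rfl] at this
      simpa using this

lemma joint_card (m n : ℕ) (S : Finset (Fin m)) (T : Finset (Fin n)) :
    (S.map (Fin.castAddEmb n) ∪ T.map (Fin.natAddEmb m)).card = S.card + T.card := by
  rw [Finset.card_union_of_disjoint, Finset.card_map, Finset.card_map]
  rw [Finset.disjoint_left]
  rintro a ha hb
  simp only [Finset.mem_map, Fin.castAddEmb, Fin.natAddEmb] at ha hb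
  obtain ⟨x, -, hx⟩ := ha
  obtain ⟨y, -, hy⟩ := hb
  have h1 := congrArg (Fin.val) hx
  have h2 := congrArg (Fin.val) hy
  simp [Fin.coe_castAdd, Fin.coe_natAdd, Function.Embedding.coeFn_mk, Fin.castLEEmb_apply] at h1 h2
  dsimp only [DFunLike.coe] at h1 h2
  simp at h1 h2
  omega

end Joint

section JointProb
variable {Ω : Type*} [MeasurableSpace Ω] (X : ℕ → Ω → ℕ) (P : Measure Ω)
  [IsProbabilityMeasure P] (μ : Measure ℝ)

lemma joint_prob (hX01 : ∀ k ω, X k ω ≤ 1) (hXmeas : ∀ k, Measurable (X k))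
    (hexch : Exchangeable P X) (hμ : IsDeFinettiMeasure P X μ)
    (m n r' h : ℕ) (hr : r' ≤ m) (hh : h ≤ n) :
    (P ({ω : Ω | ∑ i ∈ Finset.range m, X (0 + i) ω = r'} ∩
        {ω : Ω | ∑ i ∈ Finset.range n, X (m + i) ω = h})).toReal =
      (m.choose r' : ℝ) * (n.choose h : ℝ) *
        ∫ ξ in Set.Icc (0:ℝ) 1, ξ ^ (r' + h) * (1 - ξ) ^ ((m - r') + (n - h)) ∂μ := by
  rw [sum_event_eq X hX01 0 m r', sum_event_eq X hX01 m n h]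
  have hU : (⋃ S ∈ Finset.powersetCard r' (Finset.univ : Finset (Fin m)), pattE X 0 m S) ∩
      (⋃ T ∈ Finset.powersetCard h (Finset.univ : Finset (Fin n)), pattE X m n T) =
      ⋃ p ∈ (Finset.powersetCard r' (Finset.univ : Finset (Fin m)) ×ˢ
        Finset.powersetCard h (Finset.univ : Finset (Fin n))),
        (pattE X 0 m p.1 ∩ pattE X m n p.2) := by
    ext ω
    simp only [Set.mem_inter_iff, Set.mem_iUnion, Finset.mem_product, exists_prop, Prod.exists]
    constructor
    · rintro ⟨⟨S, hS, h1⟩, ⟨T, hT, h2⟩⟩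
      exact ⟨S, T, ⟨hS, hT⟩, h1, h2⟩
    · rintro ⟨S, T, ⟨hS, hT⟩, h1, h2⟩
      exact ⟨⟨S, hS, h1⟩, ⟨T, hT, h2⟩⟩
  rw [hU, measure_biUnion_finset ?_ ?_]
  · rw [ENNReal.toReal_sum (fun p _ => measure_ne_top P _)]
    have hconst : ∀ p ∈ (Finset.powersetCard r' (Finset.univ : Finset (Fin m)) ×ˢ
        Finset.powersetCard h (Finset.univ : Finset (Fin n))),
        (P (pattE X 0 m p.1 ∩ pattE X m n p.2)).toReal =
          ∫ ξ in Set.Icc (0:ℝ) 1, ξ ^ (r' + h) * (1 - ξ) ^ ((m - r') + (n - h)) ∂μ := by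
      rintro ⟨S, T⟩ hp
      dsimp only
      rw [Finset.mem_product] at hp
      obtain ⟨hS, hT⟩ := hp
      rw [Finset.mem_powersetCard_univ] at hS hT
      have h1 : ((S, T).1).card = r' := hS
      have h2 : ((S, T).2).card = h := hT
      rw [pattE_inter, patt_prob_toReal X P μ hX01 hXmeas hexch hμ, joint_card, h1, h2]
      have harith : m + n - (r' + h) = m - r' + (n - h) := by omega
      rw [harith]
    rw [Finset.sum_congr rfl hconst, Finset.sum_const, Finset.card_product,
      Finset.card_powersetCard, Finset.card_powersetCard, Finset.card_univ, Finset.card_univ,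
      Fintype.card_fin, Fintype.card_fin, nsmul_eq_mul]
    push_cast
    ring
  · rintro ⟨S, T⟩ - ⟨S', T'⟩ - hne
    have : S ≠ S' ∨ T ≠ T' := by
      by_contra hcon
      push_neg at hcon
      exact hne (Prod.ext hcon.1 hcon.2)
    rcases this with hne' | hne'
    · exact Disjoint.mono Set.inter_subset_left Set.inter_subset_left
        (pattE_disj X 0 m hne')
    · exact Disjoint.mono Set.inter_subset_right Set.inter_subset_right
        (pattE_disj X m n hne')
  · rintro ⟨S, T⟩ -
    exact (pattE_meas X hXmeas 0 m S).inter (pattE_meas X hXmeas m n T)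

end JointProb

section Density
variable (μ : Measure ℝ)

lemma density_setIntegral (r s : ℕ) (Z : ℝ) (hZpos : 0 < Z) (φ : ℝ → ℝ) :
    ∫ ξ in Set.Icc (0:ℝ) 1, φ ξ
        ∂(μ.withDensity fun ξ => ENNReal.ofReal (ξ ^ r * (1 - ξ) ^ s / Z)) =
      ∫ ξ in Set.Icc (0:ℝ) 1, φ ξ * (ξ ^ r * (1 - ξ) ^ s / Z) ∂μ := by
  have hfc : Continuous fun ξ : ℝ => ξ ^ r * (1 - ξ) ^ s :=
    (continuous_pow r).mul ((continuous_const.sub continuous_id).pow s)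
  have hmeas : Measurable fun ξ : ℝ => Real.toNNReal (ξ ^ r * (1 - ξ) ^ s / Z) :=
    measurable_real_toNNReal.comp ((hfc.measurable).div_const Z)
  have hd : (fun ξ : ℝ => ENNReal.ofReal (ξ ^ r * (1 - ξ) ^ s / Z)) =
      fun ξ : ℝ => ((Real.toNNReal (ξ ^ r * (1 - ξ) ^ s / Z) : ℝ≥0) : ℝ≥0∞) := rfl
  rw [hd, restrict_withDensity measurableSet_Icc,
    integral_withDensity_eq_integral_smul hmeas]
  refine setIntegral_congr_fun measurableSet_Icc fun x hx => ?_
  obtain ⟨hx0, hx1⟩ := hx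
  have hnn : 0 ≤ x ^ r * (1 - x) ^ s / Z :=
    div_nonneg (mul_nonneg (pow_nonneg hx0 r) (pow_nonneg (by linarith) s)) hZpos.le
  rw [NNReal.smul_def, smul_eq_mul, Real.coe_toNNReal _ hnn, mul_comm]

lemma density_prob (hIcc : μ (Set.Icc (0:ℝ) 1)ᶜ = 0) [IsProbabilityMeasure μ] (r s : ℕ)
    (hZ : 0 < ∫ ξ in Set.Icc (0:ℝ) 1, ξ ^ r * (1 - ξ) ^ s ∂μ) :
    IsProbabilityMeasure (μ.withDensity fun ξ =>
      ENNReal.ofReal (ξ ^ r * (1 - ξ) ^ s / ∫ ξ in Set.Icc (0:ℝ) 1, ξ ^ r * (1 - ξ) ^ s ∂μ)) := by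
  set Z := ∫ ξ in Set.Icc (0:ℝ) 1, ξ ^ r * (1 - ξ) ^ s ∂μ with hZdef
  have hfc : Continuous fun ξ : ℝ => ξ ^ r * (1 - ξ) ^ s :=
    (continuous_pow r).mul ((continuous_const.sub continuous_id).pow s)
  constructor
  rw [withDensity_apply _ MeasurableSet.univ, Measure.restrict_univ]
  have hae : ∀ᵐ x ∂μ, x ∈ Set.Icc (0:ℝ) 1 := by
    rw [ae_iff]
    exact hIcc
  rw [← Measure.restrict_eq_self_of_ae_mem hae]
  have hint : Integrable (fun ξ : ℝ => ξ ^ r * (1 - ξ) ^ s / Z) (μ.restrict (Set.Icc 0 1)) :=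
    (hfc.continuousOn.integrableOn_compact isCompact_Icc).div_const Z
  have hnn : 0 ≤ᵐ[μ.restrict (Set.Icc (0:ℝ) 1)] fun ξ : ℝ => ξ ^ r * (1 - ξ) ^ s / Z := by
    refine (ae_restrict_iff' measurableSet_Icc).2 (ae_of_all _ fun x hx => ?_)
    obtain ⟨hx0, hx1⟩ := hx
    exact div_nonneg (mul_nonneg (pow_nonneg hx0 r) (pow_nonneg (by linarith) s)) hZ.le
  rw [← ofReal_integral_eq_lintegral_ofReal hint hnn]
  rw [integral_div, ← hZdef, div_self (ne_of_gt hZ), ENNReal.ofReal_one]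

lemma density_null_compl (hIcc : μ (Set.Icc (0:ℝ) 1)ᶜ = 0) (g : ℝ → ℝ≥0∞) :
    (μ.withDensity g) (Set.Icc (0:ℝ) 1)ᶜ = 0 := by
  rw [withDensity_apply _ measurableSet_Icc.compl, Measure.restrict_eq_zero.2 hIcc]
  simp

end Density

/-- Bayesian updating of the mixing measure: given `r` successes in the first
`r + s` trials (an event of positive probability, equivalently `Z > 0`), the shifted sequence
`(X_{r+s+k})_k` is exchangeable under the conditional measure, and the measure with density
`ξ ↦ ξ^r (1-ξ)^s / Z` with respect to `μ` is a de Finetti measure for it. -/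
theorem deFinetti_stmt13 {Ω : Type*} [MeasurableSpace Ω] (P : Measure Ω)
    [IsProbabilityMeasure P] (X : ℕ → Ω → ℕ)
    (hX01 : ∀ k ω, X k ω ≤ 1) (hXmeas : ∀ k, Measurable (X k))
    (hexch : Exchangeable P X) (μ : Measure ℝ) (hμ : IsDeFinettiMeasure P X μ)
    (r s : ℕ) (hZ : 0 < ∫ ξ in Set.Icc (0:ℝ) 1, ξ ^ r * (1 - ξ) ^ s ∂μ) :
    Exchangeable (P[|{ω | ∑ i ∈ Finset.range (r + s), X i ω = r}])
        (fun k => X (r + s + k)) ∧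
      IsDeFinettiMeasure (P[|{ω | ∑ i ∈ Finset.range (r + s), X i ω = r}])
        (fun k => X (r + s + k))
        (μ.withDensity fun ξ =>
          ENNReal.ofReal (ξ ^ r * (1 - ξ) ^ s / ∫ ξ in Set.Icc (0:ℝ) 1, ξ ^ r * (1 - ξ) ^ s ∂μ)) := by
  haveI hμprob : IsProbabilityMeasure μ := hμ.1
  set m := r + s with hm
  set Z := ∫ ξ in Set.Icc (0:ℝ) 1, ξ ^ r * (1 - ξ) ^ s ∂μ with hZdef
  set A := {ω : Ω | ∑ i ∈ Finset.range m, X i ω = r} with hA_def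
  have hrm : r ≤ m := by omega
  have hAmeas : MeasurableSet A := by
    have hsum : Measurable fun ω => ∑ i ∈ Finset.range m, X i ω :=
      Finset.measurable_sum _ fun i _ => hXmeas i
    exact hsum (measurableSet_singleton r)
  have hA0 : {ω : Ω | ∑ i ∈ Finset.range m, X (0 + i) ω = r} = A := by
    simp only [hA_def, Nat.zero_add]
  have hPA : (P A).toReal = (m.choose r : ℝ) * Z := by
    have h0 : {ω : Ω | ∑ i ∈ Finset.range 0, X (m + i) ω = 0} = Set.univ := by
      ext ω; simp
    have hj := joint_prob X P μ hX01 hXmeas hexch hμ m 0 r 0 hrm (le_refl 0)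
    rw [h0, Set.inter_univ, hA0] at hj
    have h1 : m - r + (0 - 0) = s := by omega
    rw [h1] at hj
    simpa using hj
  have hcm : (0:ℝ) < (m.choose r : ℝ) := by exact_mod_cast Nat.choose_pos hrm
  have hPApos : 0 < (P A).toReal := by rw [hPA]; positivity
  have hPAne : P A ≠ 0 := by
    intro h0
    rw [h0] at hPApos
    simp at hPApos
  constructor
  · -- Exchangeability of the shifted sequence under the conditional measure
    intro n σ
    have hmσ : Measurable fun ω => fun i : Fin n => X (m + ((σ i : Fin n) : ℕ)) ω :=
      measurable_pi_lambda _ fun i => hXmeas _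
    have hmid : Measurable fun ω => fun i : Fin n => X (m + (i : ℕ)) ω :=
      measurable_pi_lambda _ fun i => hXmeas _
    refine Measure.ext fun E hE => ?_
    rw [Measure.map_apply hmσ hE, Measure.map_apply hmid hE, cond_apply hAmeas,
      cond_apply hAmeas]
    congr 1
    set τ : Equiv.Perm (Fin (m + n)) :=
      Equiv.permCongr finSumFinEquiv (Equiv.sumCongr (Equiv.refl (Fin m)) σ) with hτdef
    have hτ1 : ∀ i : Fin m, τ (Fin.castAdd n i) = Fin.castAdd n i := by
      intro i
      simp [hτdef, Equiv.permCongr_apply, finSumFinEquiv_symm_apply_castAdd]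
    have hτ2 : ∀ j : Fin n, τ (Fin.natAdd m j) = Fin.natAdd m (σ j) := by
      intro j
      simp [hτdef, Equiv.permCongr_apply, finSumFinEquiv_symm_apply_natAdd]
    set D : Set (Fin (m + n) → ℕ) :=
      ((fun f : Fin (m + n) → ℕ => ∑ i : Fin m, f (Fin.castAdd n i)) ⁻¹' {r}) ∩
        ((fun (f : Fin (m + n) → ℕ) (j : Fin n) => f (Fin.natAdd m j)) ⁻¹' E) with hDdef
    have hg1 : Measurable fun f : Fin (m + n) → ℕ => ∑ i : Fin m, f (Fin.castAdd n i) :=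
      Finset.measurable_sum Finset.univ fun i _ => measurable_pi_apply (Fin.castAdd n i)
    have hg2 : Measurable fun (f : Fin (m + n) → ℕ) (j : Fin n) => f (Fin.natAdd m j) :=
      measurable_pi_lambda _ fun j => measurable_pi_apply (Fin.natAdd m j)
    have hD : MeasurableSet D :=
      MeasurableSet.inter (hg1 (measurableSet_singleton r)) (hg2 hE)
    have key := exch_pre X P hexch hXmeas (m + n) τ hD
    have e1 : (fun ω => fun i : Fin (m + n) => X ((τ i : Fin (m + n)) : ℕ) ω) ⁻¹' D =
        A ∩ ((fun ω => fun i : Fin n => X (m + ((σ i : Fin n) : ℕ)) ω) ⁻¹' E) := by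
      ext ω
      simp only [hDdef, Set.mem_preimage, Set.mem_inter_iff, Set.mem_singleton_iff, hA_def,
        Set.mem_setOf_eq]
      have c1 : ∑ i : Fin m, X ((τ (Fin.castAdd n i) : Fin (m + n)) : ℕ) ω =
          ∑ i ∈ Finset.range m, X i ω := by
        rw [← Fin.sum_univ_eq_sum_range (fun i => X i ω) m]
        refine Finset.sum_congr rfl fun i _ => ?_
        rw [hτ1 i, Fin.coe_castAdd]
      have c2 : (fun j : Fin n => X ((τ (Fin.natAdd m j) : Fin (m + n)) : ℕ) ω) =
          fun j : Fin n => X (m + ((σ j : Fin n) : ℕ)) ω := by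
        funext j
        rw [hτ2 j, Fin.coe_natAdd]
      rw [c1, c2]
    have e2 : (fun ω => fun i : Fin (m + n) => X ((i : Fin (m + n)) : ℕ) ω) ⁻¹' D =
        A ∩ ((fun ω => fun i : Fin n => X (m + (i : ℕ)) ω) ⁻¹' E) := by
      ext ω
      simp only [hDdef, Set.mem_preimage, Set.mem_inter_iff, Set.mem_singleton_iff, hA_def,
        Set.mem_setOf_eq]
      have c1 : ∑ i : Fin m, X ((Fin.castAdd n i : Fin (m + n)) : ℕ) ω =
          ∑ i ∈ Finset.range m, X i ω := by
        rw [← Fin.sum_univ_eq_sum_range (fun i => X i ω) m]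
        refine Finset.sum_congr rfl fun i _ => ?_
        rw [Fin.coe_castAdd]
      have c2 : (fun j : Fin n => X ((Fin.natAdd m j : Fin (m + n)) : ℕ) ω) =
          fun j : Fin n => X (m + (j : ℕ)) ω := by
        funext j
        rw [Fin.coe_natAdd]
      rw [c1, c2]
    rw [e1, e2] at key
    exact key
  · -- de Finetti property
    refine ⟨density_prob μ hμ.2.1 r s hZ, density_null_compl μ hμ.2.1 _, ?_⟩
    intro n h hn hh
    unfold succProb
    have hB : {ω : Ω | ∑ i ∈ Finset.range n, (fun k => X (m + k)) i ω = h} =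
        {ω : Ω | ∑ i ∈ Finset.range n, X (m + i) ω = h} := rfl
    rw [hB, cond_apply hAmeas, ENNReal.toReal_mul, ENNReal.toReal_inv]
    have hjoint := joint_prob X P μ hX01 hXmeas hexch hμ m n r h hrm hh
    rw [hA0] at hjoint
    have harith : m - r + (n - h) = s + (n - h) := by omega
    rw [harith] at hjoint
    rw [hjoint, hPA]
    rw [density_setIntegral μ r s Z hZ (fun ξ => ξ ^ h * (1 - ξ) ^ (n - h))]
    have hcong : ∫ ξ in Set.Icc (0:ℝ) 1, ξ ^ h * (1 - ξ) ^ (n - h) * (ξ ^ r * (1 - ξ) ^ s / Z) ∂μ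
        = (∫ ξ in Set.Icc (0:ℝ) 1, ξ ^ (r + h) * (1 - ξ) ^ (s + (n - h)) ∂μ) / Z := by
      rw [← integral_div]
      refine setIntegral_congr_fun measurableSet_Icc fun x hx => ?_
      rw [pow_add, pow_add]
      ring
    rw [hcong]
    field_simp
end

section
/- (Asymptotic concentration of the posterior) Let μ be a probability measure on [0,1], let r, s be natural numbers not both zero, and set f := r/(r+s). Assume that μ charges every neighborhood of f, i.e. μ((f−ε, f+ε) ∩ [0,1]) > 0 for all ε > 0. Then for every continuous function g : [0,1] → ℝ, the ratio (∫₀¹ g(ξ) ξ^{n r} (1−ξ)^{n s} dμ(ξ)) / (∫₀¹ ξ^{n r} (1−ξ)^{n s} dμ(ξ)) converges to g(f) as n → ∞; that is, the probability measures proportional to ξ^{n r}(1−ξ)^{n s} dμ converge weakly to the Dirac measure at f. -/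
open MeasureTheory ProbabilityTheory Filter Set

lemma phi_hasDeriv (r s : ℕ) (x : ℝ) :
    HasDerivAt (fun ξ : ℝ => ξ ^ r * (1 - ξ) ^ s)
      ((r:ℝ) * x ^ (r-1) * (1-x)^s - (s:ℝ) * x^r * (1-x)^(s-1)) x := by
  have h1 : HasDerivAt (fun ξ : ℝ => ξ ^ r) ((r:ℝ) * x ^ (r-1)) x := hasDerivAt_pow r x
  have h2' : HasDerivAt (fun ξ : ℝ => 1 - ξ) (-1) x := (hasDerivAt_id x).const_sub 1
  have h2 : HasDerivAt (fun ξ : ℝ => (1 - ξ) ^ s) ((s:ℝ) * (1-x)^(s-1) * (-1)) x := by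
    exact h2'.pow s
  have := h1.fun_mul h2
  refine this.congr_deriv ?_
  ring

-- strict max lemma
lemma phi_lt (r s : ℕ) (hrs : r + s ≠ 0) (x : ℝ) (hx : x ∈ Icc (0:ℝ) 1)
    (hne : x ≠ (r:ℝ)/(r+s)) :
    x ^ r * (1-x)^s < ((r:ℝ)/(r+s))^r * (1 - (r:ℝ)/(r+s))^s := by
  set f : ℝ := (r:ℝ)/(r+s) with hf
  have hrspos : (0:ℝ) < (r:ℝ) + s := by
    have : 0 < r + s := Nat.pos_of_ne_zero hrs
    exact_mod_cast this
  have hf0 : 0 ≤ f := div_nonneg (by positivity) hrspos.le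
  have hf1 : f ≤ 1 := by
    rw [hf, div_le_one hrspos]; push_cast; linarith [Nat.cast_nonneg (α := ℝ) s]
  have hmono : 0 < r → StrictMonoOn (fun ξ : ℝ => ξ ^ r * (1 - ξ) ^ s) (Icc 0 f) := by
    intro hr
    apply strictMonoOn_of_deriv_pos (convex_Icc 0 f)
    · exact (continuous_pow r).continuousOn.mul ((continuous_const.sub continuous_id).pow s).continuousOn
    · intro x hx
      rw [interior_Icc] at hx
      rw [(phi_hasDeriv r s x).deriv]
      have hx0 : 0 < x := hx.1
      have hxf : x < f := hx.2
      rcases Nat.eq_zero_or_pos s with hs | hs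
      · subst hs
        simp only [Nat.cast_zero, zero_mul, sub_zero, pow_zero, mul_one]
        positivity
      · have hx1 : x < 1 := lt_of_lt_of_le hxf hf1
        have key : (r:ℝ) * x ^ (r-1) * (1-x)^s - (s:ℝ) * x^r * (1-x)^(s-1)
            = x^(r-1) * (1-x)^(s-1) * ((r:ℝ) - ((r:ℝ)+s) * x) := by
          have hr' : r = (r-1) + 1 := (Nat.succ_pred_eq_of_pos hr).symm
          have hs' : s = (s-1) + 1 := (Nat.succ_pred_eq_of_pos hs).symm
          rw [hr', hs']
          simp only [Nat.add_sub_cancel]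
          push_cast
          ring
        rw [key]
        have : (r:ℝ) - ((r:ℝ)+s) * x > 0 := by
          have : ((r:ℝ)+s) * x < ((r:ℝ)+s) * f := by
            exact mul_lt_mul_of_pos_left hxf hrspos
          rw [hf, mul_div_cancel₀ _ hrspos.ne'] at this
          linarith
        have h1x : (0:ℝ) < 1 - x := by linarith
        have hpos : 0 < x^(r-1) * (1-x)^(s-1) := by positivity
        nlinarith
  have hanti : 0 < s → StrictAntiOn (fun ξ : ℝ => ξ ^ r * (1 - ξ) ^ s) (Icc f 1) := by
    intro hs
    apply strictAntiOn_of_deriv_neg (convex_Icc f 1)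
    · exact (continuous_pow r).continuousOn.mul ((continuous_const.sub continuous_id).pow s).continuousOn
    · intro x hx
      rw [interior_Icc] at hx
      rw [(phi_hasDeriv r s x).deriv]
      have hxf : f < x := hx.1
      have hx1 : x < 1 := hx.2
      rcases Nat.eq_zero_or_pos r with hr | hr
      · subst hr
        simp only [Nat.cast_zero, zero_mul, zero_sub, pow_zero, one_mul, neg_lt, neg_zero]
        have : (0:ℝ) < 1 - x := by linarith
        positivity
      · have hx0 : 0 < x := by
          have : 0 < f := by
            rw [hf]; apply div_pos _ hrspos; exact_mod_cast hr
          linarith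
        have key : (r:ℝ) * x ^ (r-1) * (1-x)^s - (s:ℝ) * x^r * (1-x)^(s-1)
            = x^(r-1) * (1-x)^(s-1) * ((r:ℝ) - ((r:ℝ)+s) * x) := by
          have hr' : r = (r-1) + 1 := (Nat.succ_pred_eq_of_pos hr).symm
          have hs' : s = (s-1) + 1 := (Nat.succ_pred_eq_of_pos hs).symm
          rw [hr', hs']
          simp only [Nat.add_sub_cancel]
          push_cast
          ring
        rw [key]
        have hneg : (r:ℝ) - ((r:ℝ)+s) * x < 0 := by
          have : ((r:ℝ)+s) * f < ((r:ℝ)+s) * x := mul_lt_mul_of_pos_left hxf hrspos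
          rw [hf, mul_div_cancel₀ _ hrspos.ne'] at this
          linarith
        have h1x : (0:ℝ) < 1 - x := by linarith
        have : 0 < x^(r-1) * (1-x)^(s-1) := by positivity
        nlinarith
  rcases lt_or_gt_of_ne hne with h | h
  · have hr : 0 < r := by
      by_contra hr
      push_neg at hr
      interval_cases r
      simp [hf] at h
      linarith [hx.1]
    exact hmono hr ⟨hx.1, h.le⟩ ⟨hf0, le_refl f⟩ h
  · have hs : 0 < s := by
      by_contra hs
      push_neg at hs
      interval_cases s
      have : f = 1 := by
        have hr0 : (r:ℝ) ≠ 0 := Nat.cast_ne_zero.mpr (by simpa using hrs)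
        rw [hf]; push_cast; rw [add_zero, div_self hr0]
      rw [this] at h
      linarith [hx.2]
    exact hanti hs ⟨le_refl f, hf1⟩ ⟨h.le, hx.2⟩ h


set_option maxHeartbeats 1000000 in
/-- asymptotic concentration of the posterior: if `μ` is a probability measure on
`[0,1]` charging every neighborhood of `f = r/(r+s)` (with `r + s ≠ 0`), then for every
continuous `g : [0,1] → ℝ` the posterior expectations
`(∫₀¹ g(ξ) ξ^{nr} (1-ξ)^{ns} dμ) / (∫₀¹ ξ^{nr} (1-ξ)^{ns} dμ)` converge to `g(f)`:
the normalized measures `ξ^{nr}(1-ξ)^{ns} dμ` converge weakly to the Dirac measure at `f`. -/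
theorem deFinetti_stmt14 (μ : Measure ℝ) [IsProbabilityMeasure μ]
    (hsupp : μ (Set.Icc (0:ℝ) 1)ᶜ = 0) (r s : ℕ) (hrs : r + s ≠ 0)
    (hcharge : ∀ ε : ℝ, 0 < ε →
      0 < μ (Set.Ioo ((r : ℝ) / (r + s) - ε) ((r : ℝ) / (r + s) + ε) ∩ Set.Icc (0:ℝ) 1))
    (g : ℝ → ℝ) (hg : ContinuousOn g (Set.Icc (0:ℝ) 1)) :
    Tendsto
      (fun n : ℕ =>
        (∫ ξ in Set.Icc (0:ℝ) 1, g ξ * ξ ^ (n * r) * (1 - ξ) ^ (n * s) ∂μ) /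
          (∫ ξ in Set.Icc (0:ℝ) 1, ξ ^ (n * r) * (1 - ξ) ^ (n * s) ∂μ))
      atTop (nhds (g ((r : ℝ) / (r + s)))) := by
  have hrspos : (0:ℝ) < (r:ℝ) + s := by
    have : 0 < r + s := Nat.pos_of_ne_zero hrs
    exact_mod_cast this
  set f : ℝ := (r:ℝ)/((r:ℝ)+s) with hfdef
  have hf0 : 0 ≤ f := div_nonneg (by positivity) hrspos.le
  have hf1 : f ≤ 1 := by
    rw [hfdef, div_le_one hrspos]; linarith [Nat.cast_nonneg (α := ℝ) s]
  have hfI : f ∈ Icc (0:ℝ) 1 := ⟨hf0, hf1⟩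
  set φ : ℝ → ℝ := fun ξ => ξ ^ r * (1 - ξ) ^ s with hφdef
  have hφc : Continuous φ := by
    exact (continuous_pow r).mul ((continuous_const.sub continuous_id).pow s)
  have hφnn : ∀ x ∈ Icc (0:ℝ) 1, 0 ≤ φ x := by
    intro x hx
    have h1 : (0:ℝ) ≤ 1 - x := by linarith [hx.2]
    have h0 := hx.1
    positivity
  set M : ℝ := φ f with hMdef
  have hM : 0 < M := by
    rw [hMdef, hφdef]
    have h1f : 0 ≤ 1 - f := by linarith
    rcases Nat.eq_zero_or_pos r with hr | hr
    · subst hr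
      rcases Nat.eq_zero_or_pos s with hs | hs
      · omega
      · have : 1 - f > 0 := by
          simp only [hfdef]
          have : (0:ℝ)/((0:ℝ)+s) = 0 := by simp
          push_cast
          rw [this]
          norm_num
        positivity
    · have hfpos : 0 < f := by
        rw [hfdef]; apply div_pos _ hrspos; exact_mod_cast hr
      rcases Nat.eq_zero_or_pos s with hs | hs
      · subst hs; simp only [pow_zero, mul_one]; positivity
      · have : 0 < 1 - f := by
          rw [hfdef]
          have : (r:ℝ)/((r:ℝ)+s) < 1 := by
            rw [div_lt_one hrspos]
            have : (0:ℝ) < s := by exact_mod_cast hs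
            linarith
          linarith
        positivity
  have hmax : ∀ x ∈ Icc (0:ℝ) 1, x ≠ f → φ x < M := by
    intro x hx hne
    exact phi_lt r s hrs x hx hne
  have hmaxle : ∀ x ∈ Icc (0:ℝ) 1, φ x ≤ M := by
    intro x hx
    rcases eq_or_ne x f with h | h
    · rw [h]
    · exact (hmax x hx h).le
  -- rewrite integrands
  have hEq : ∀ (n:ℕ) (ξ:ℝ), ξ ^ (n*r) * (1-ξ)^(n*s) = (φ ξ)^n := by
    intro n ξ
    rw [hφdef]
    simp only [mul_pow, ← pow_mul, mul_comm r n, mul_comm s n]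
  simp only [mul_assoc, hEq]
  -- integrability helper
  have hint : ∀ h : ℝ → ℝ, ContinuousOn h (Icc (0:ℝ) 1) → IntegrableOn h (Icc (0:ℝ) 1) μ :=
    fun h hh => hh.integrableOn_compact isCompact_Icc
  have hintφ : ∀ n : ℕ, IntegrableOn (fun ξ => (φ ξ)^n) (Icc (0:ℝ) 1) μ :=
    fun n => hint _ ((hφc.pow n).continuousOn)
  have hintgφ : ∀ n : ℕ, IntegrableOn (fun ξ => g ξ * (φ ξ)^n) (Icc (0:ℝ) 1) μ :=
    fun n => hint _ (hg.mul (hφc.pow n).continuousOn)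
  have hintabs : ∀ n : ℕ, IntegrableOn (fun ξ => |g ξ - g f| * (φ ξ)^n) (Icc (0:ℝ) 1) μ :=
    fun n => hint _ (((hg.sub continuousOn_const).abs).mul (hφc.pow n).continuousOn)
  -- bound C on |g - g f|
  obtain ⟨C₀, hC₀⟩ := isCompact_Icc.exists_bound_of_continuousOn (f := fun x => g x - g f) (hg.sub continuousOn_const)
  set C : ℝ := C₀ + 1 with hCdef
  have hC : ∀ x ∈ Icc (0:ℝ) 1, |g x - g f| ≤ C := by
    intro x hx
    have := hC₀ x hx
    simp only [Real.norm_eq_abs] at this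
    linarith
  have hCpos : 0 < C := by
    have := hC₀ 0 (by constructor <;> norm_num)
    have h0 : (0:ℝ) ≤ ‖g 0 - g f‖ := norm_nonneg _
    linarith
  rw [Metric.tendsto_atTop]
  intro ε hε
  -- δ from continuity of g at f
  have hgf : ContinuousWithinAt g (Icc (0:ℝ) 1) f := hg f hfI
  rw [Metric.continuousWithinAt_iff] at hgf
  obtain ⟨δ₀, hδ₀, hδ₀prop⟩ := hgf (ε/2) (by linarith)
  set δ : ℝ := min δ₀ (1/2) with hδdef
  have hδpos : 0 < δ := lt_min hδ₀ (by norm_num)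
  have hδhalf : δ ≤ 1/2 := min_le_right _ _
  -- the compact complement set
  set K : Set ℝ := Icc (0:ℝ) 1 \ Ioo (f - δ) (f + δ) with hKdef
  have hKcomp : IsCompact K := isCompact_Icc.diff isOpen_Ioo
  have hKne : K.Nonempty := by
    by_cases h0 : (0:ℝ) ∈ Ioo (f - δ) (f + δ)
    · refine ⟨1, ⟨by norm_num, ?_⟩⟩
      intro h1
      have h0' := h0.1
      have h1' := h1.2
      linarith
    · exact ⟨0, ⟨by constructor <;> norm_num, h0⟩⟩
  obtain ⟨x₀, hx₀K, hx₀max⟩ := hKcomp.exists_isMaxOn hKne hφc.continuousOn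
  set m : ℝ := φ x₀ with hmdef
  have hm0 : 0 ≤ m := hφnn x₀ hx₀K.1
  have hmM : m < M := by
    apply hmax x₀ hx₀K.1
    intro h
    exact hx₀K.2 (h ▸ ⟨by linarith, by linarith⟩)
  set θ : ℝ := (m + M)/2 with hθdef
  have hθpos : 0 < θ := by rw [hθdef]; linarith
  have hmθ : m < θ := by rw [hθdef]; linarith
  have hθM : θ < M := by rw [hθdef]; linarith
  -- η from continuity of φ at f
  have hev : ∀ᶠ x in nhds f, θ < φ x := (hφc.continuousAt (x := f)).eventually_const_lt hθM
  rw [Metric.eventually_nhds_iff] at hev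
  obtain ⟨η, hη, hηprop⟩ := hev
  set A : Set ℝ := Ioo (f - η) (f + η) ∩ Icc (0:ℝ) 1 with hAdef
  have hAm : MeasurableSet A := measurableSet_Ioo.inter measurableSet_Icc
  have hAμ : 0 < μ A := hcharge η hη
  set c : ℝ := (μ A).toReal with hcdef
  have hcpos : 0 < c := by
    rw [hcdef]
    exact ENNReal.toReal_pos hAμ.ne' (measure_ne_top μ A)
  have hAsub : A ⊆ Icc (0:ℝ) 1 := inter_subset_right
  have hAθ : ∀ x ∈ A, θ < φ x := by
    intro x hx
    apply hηprop
    rw [Real.dist_eq, abs_sub_lt_iff]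
    constructor <;> [linarith [hx.1.2]; linarith [hx.1.1]]
  -- denominator lower bound
  set D : ℕ → ℝ := fun n => ∫ ξ in Icc (0:ℝ) 1, (φ ξ)^n ∂μ with hDdef
  have hφnnae : ∀ n : ℕ, 0 ≤ᶠ[ae (μ.restrict (Icc (0:ℝ) 1))] fun ξ => (φ ξ)^n := by
    intro n
    filter_upwards [ae_restrict_mem measurableSet_Icc] with x hx
    exact pow_nonneg (hφnn x hx) n
  have hDlb : ∀ n : ℕ, θ^n * c ≤ D n := by
    intro n
    have h1 : θ^n * c ≤ ∫ ξ in A, (φ ξ)^n ∂μ := by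
      rw [hcdef, mul_comm, ← smul_eq_mul]
      apply setIntegral_ge_of_const_le hAm (measure_ne_top μ A)
      · intro x hx
        exact pow_le_pow_left₀ hθpos.le (hAθ x hx).le n
      · exact (hintφ n).mono_set hAsub
    have h2 : ∫ ξ in A, (φ ξ)^n ∂μ ≤ D n := by
      apply setIntegral_mono_set (hintφ n) (hφnnae n) (HasSubset.Subset.eventuallyLE hAsub)
    linarith
  have hDpos : ∀ n : ℕ, 0 < D n := fun n => lt_of_lt_of_le (by positivity) (hDlb n)
  -- numerator bound
  set B : Set ℝ := Icc (0:ℝ) 1 ∩ Ioo (f - δ) (f + δ) with hBdef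
  have hBm : MeasurableSet B := measurableSet_Icc.inter measurableSet_Ioo
  have hKm : MeasurableSet K := measurableSet_Icc.diff measurableSet_Ioo
  have hBK : B ∪ K = Icc (0:ℝ) 1 := inter_union_diff _ _
  have hBKdisj : Disjoint B K := Set.disjoint_of_subset_left inter_subset_right disjoint_sdiff_right
  have hNum : ∀ n : ℕ, |(∫ ξ in Icc (0:ℝ) 1, g ξ * (φ ξ)^n ∂μ) - g f * D n| ≤ ε/2 * D n + C * m^n := by
    intro n
    have hsub : (∫ ξ in Icc (0:ℝ) 1, g ξ * (φ ξ)^n ∂μ) - g f * D n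
        = ∫ ξ in Icc (0:ℝ) 1, (g ξ - g f) * (φ ξ)^n ∂μ := by
      rw [hDdef]
      rw [← integral_const_mul, ← integral_sub (hintgφ n) ((hintφ n).const_mul (g f))]
      congr 1
      funext x
      ring
    rw [hsub]
    have habs : |∫ ξ in Icc (0:ℝ) 1, (g ξ - g f) * (φ ξ)^n ∂μ|
        ≤ ∫ ξ in Icc (0:ℝ) 1, |g ξ - g f| * (φ ξ)^n ∂μ := by
      have h1 := norm_integral_le_integral_norm
        (f := fun ξ => (g ξ - g f) * (φ ξ)^n) (μ := μ.restrict (Icc (0:ℝ) 1))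
      simp only [Real.norm_eq_abs] at h1
      apply le_trans h1
      apply le_of_eq
      apply integral_congr_ae
      filter_upwards [ae_restrict_mem measurableSet_Icc] with x hx
      rw [abs_mul, abs_of_nonneg (pow_nonneg (hφnn x hx) n)]
    apply le_trans habs
    have hsplit : ∫ ξ in Icc (0:ℝ) 1, |g ξ - g f| * (φ ξ)^n ∂μ
        = (∫ ξ in B, |g ξ - g f| * (φ ξ)^n ∂μ) + ∫ ξ in K, |g ξ - g f| * (φ ξ)^n ∂μ := by
      rw [← hBK]
      exact setIntegral_union hBKdisj hKm ((hintabs n).mono_set (hBK ▸ subset_union_left))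
        ((hintabs n).mono_set (hBK ▸ subset_union_right))
    rw [hsplit]
    clear hsplit habs hsub
    have hB' : ∫ ξ in B, |g ξ - g f| * (φ ξ)^n ∂μ ≤ ε/2 * D n := by
      have step1 : ∫ ξ in B, |g ξ - g f| * (φ ξ)^n ∂μ ≤ ∫ ξ in B, ε/2 * (φ ξ)^n ∂μ := by
        apply setIntegral_mono_on ((hintabs n).mono_set inter_subset_left)
          (((hintφ n).mono_set inter_subset_left).const_mul _) hBm
        intro x hx
        have hgx : |g x - g f| ≤ ε/2 := by
          have hδle : δ ≤ δ₀ := min_le_left _ _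
          have := hδ₀prop hx.1 (by
            rw [Real.dist_eq, abs_sub_lt_iff]
            have h1 := hx.2.1
            have h2 := hx.2.2
            constructor <;> linarith)
          rw [Real.dist_eq] at this
          linarith
        exact mul_le_mul_of_nonneg_right hgx (pow_nonneg (hφnn x hx.1) n)
      have step2 : ∫ ξ in B, ε/2 * (φ ξ)^n ∂μ ≤ ε/2 * D n := by
        rw [integral_const_mul, hDdef]
        apply mul_le_mul_of_nonneg_left _ (by linarith : (0:ℝ) ≤ ε/2)
        exact setIntegral_mono_set (hintφ n) (hφnnae n)
          (HasSubset.Subset.eventuallyLE inter_subset_left)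
      linarith
    have hK' : ∫ ξ in K, |g ξ - g f| * (φ ξ)^n ∂μ ≤ C * m^n := by
      have step1 : ∫ ξ in K, |g ξ - g f| * (φ ξ)^n ∂μ ≤ ∫ _ in K, C * m^n ∂μ := by
        apply setIntegral_mono_on ((hintabs n).mono_set diff_subset)
          (integrableOn_const (measure_ne_top μ K)) hKm
        intro x hx
        exact mul_le_mul (hC x hx.1) (pow_le_pow_left₀ (hφnn x hx.1) (hx₀max hx) n)
          (pow_nonneg (hφnn x hx.1) n) hCpos.le
      have step2 : ∫ _ in K, C * m^n ∂μ ≤ C * m^n := by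
        rw [setIntegral_const, smul_eq_mul, measureReal_def]
        have hμK : (μ K).toReal ≤ 1 := by
          rw [show (1:ℝ) = (μ Set.univ).toReal by simp]
          exact ENNReal.toReal_mono (measure_ne_top μ _) (measure_mono (subset_univ _))
        have hCm : 0 ≤ C * m^n := by positivity
        nlinarith
      linarith
    exact add_le_add hB' hK'
  -- assemble
  have hratio : Tendsto (fun n : ℕ => C / c * (m/θ)^n) atTop (nhds 0) := by
    rw [show (0:ℝ) = C / c * 0 by ring]
    exact (tendsto_pow_atTop_nhds_zero_of_lt_one (by positivity)
      (by rw [div_lt_one hθpos]; exact hmθ)).const_mul _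
  have hev2 : ∀ᶠ n in atTop, C / c * (m/θ)^n < ε/2 :=
    hratio.eventually_lt_const (by linarith)
  obtain ⟨N, hN⟩ := eventually_atTop.mp hev2
  refine ⟨N, fun n hn => ?_⟩
  have hDne : D n ≠ 0 := (hDpos n).ne'
  have h2 := hN n hn
  have h1 : C * m^n < ε/2 * (θ^n * c) := by
    have hθn : θ^n ≠ 0 := pow_ne_zero n hθpos.ne'
    have hcne : c ≠ 0 := hcpos.ne'
    have heq : (C/c * (m/θ)^n) * (θ^n * c) = C * m^n := by
      rw [div_pow, mul_comm (θ^n) c, mul_mul_mul_comm, div_mul_cancel₀ _ hcne,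
        div_mul_cancel₀ _ hθn]
    rw [← heq]
    exact mul_lt_mul_of_pos_right h2 (by positivity)
  have h3 : ε/2 * (θ^n*c) ≤ ε/2 * D n := mul_le_mul_of_nonneg_left (hDlb n) (by linarith)
  have habs' := hNum n
  have hfin : |(∫ ξ in Icc (0:ℝ) 1, g ξ * (φ ξ)^n ∂μ) - g f * D n| < ε * D n := by linarith
  rw [Real.dist_eq, show (∫ ξ in Icc (0:ℝ) 1, g ξ * (φ ξ)^n ∂μ) / D n - g f
      = ((∫ ξ in Icc (0:ℝ) 1, g ξ * (φ ξ)^n ∂μ) - g f * D n)/D n from by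
        rw [sub_div, mul_div_assoc, div_self hDne, mul_one],
    abs_div, abs_of_pos (hDpos n), div_lt_iff₀ (hDpos n)]
  linarith
end
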